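/- arXiv:1302.3064 — 4 statements merged into one kernel-verified Lean document; each statement's English description precedes it below -/
import Mathlib

section
/- For any graph G with at least one edge, χ(G*) ≤ cochord(G). -/
open scoped Classical

noncomputable section

/-! ## Simplicial complexes and Castelnuovo–Mumford regularity -/

/-- A (abstract) simplicial complex on the vertex type `V`, given as a
downward closed family of finsets. -/
def IsComplex {V : Type} (Δ : Finset V → Prop) : Prop :=
  ∀ ⦃F G : Finset V⦄, Δ F → G ⊆ F → Δ G

/-- The faces of cardinality `n` of a family `Δ` (faces of card `n` are the
`(n-1)`-dimensional simplices). -/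
def Faces {V : Type} (Δ : Finset V → Prop) (n : ℕ) : Type :=
  {F : Finset V // Δ F ∧ F.card = n}

/-- The simplicial boundary map of the (augmented) chain complex of `Δ` over
a field `k`, from chains on faces of card `n+1` to chains on faces of card `n`,
with signs determined by a linear order on the vertices. -/
def cxBoundary {V : Type} (k : Type) [Field k] [LinearOrder V]
    (Δ : Finset V → Prop) (n : ℕ) :
    (Faces Δ (n + 1) →₀ k) →ₗ[k] (Faces Δ n →₀ k) :=
  Finsupp.lsum k fun F => LinearMap.toSpanSingleton k _
    (∑ x ∈ F.1.attach,
      ((-1 : k) ^ (F.1.filter (fun z => z < x.1)).card) •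
        (if h : Δ (F.1.erase x.1) ∧ (F.1.erase x.1).card = n then
          Finsupp.single (⟨F.1.erase x.1, h⟩ : Faces Δ n) (1 : k) else 0))

/-- Cycles in chain degree `j` (faces of card `j`); in the bottom degree every
chain is a cycle (augmented complex). -/
def cxCycles {V : Type} (k : Type) [Field k] [LinearOrder V]
    (Δ : Finset V → Prop) : (j : ℕ) → Submodule k (Faces Δ j →₀ k)
  | 0 => ⊤
  | (n + 1) => LinearMap.ker (cxBoundary k Δ n)

/-- Nonvanishing of the reduced homology `H̃_{j-1}(Δ; k)`: there is a cycle
supported on faces of cardinality `j` that is not a boundary. -/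
def HNontrivial {V : Type} (k : Type) [Field k] [LinearOrder V]
    (Δ : Finset V → Prop) (j : ℕ) : Prop :=
  ¬ (cxCycles k Δ j ≤ LinearMap.range (cxBoundary k Δ j))

/-- The induced subcomplex `Δ[S]` on a set `S` of vertices. -/
def restrictC {V : Type} (Δ : Finset V → Prop) (S : Set V) : Finset V → Prop :=
  fun F => ↑F ⊆ S ∧ Δ F

/-- The Castelnuovo–Mumford regularity of `Δ` over the field `k`:
the largest `j` such that `H̃_{j-1}(Δ[S]; k) ≠ 0` for some subset `S` of the
vertices. -/
def regC {V : Type} [Fintype V] (k : Type) [Field k] (Δ : Finset V → Prop) : ℕ :=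
  letI : LinearOrder V :=
    LinearOrder.lift' (Fintype.equivFin V) (Fintype.equivFin V).injective
  sSup {j : ℕ | ∃ S : Set V, HNontrivial k (restrictC Δ S) j}

/-- The deletion `del_Δ(x)`. -/
def delC {V : Type} (Δ : Finset V → Prop) (x : V) : Finset V → Prop :=
  fun F => Δ F ∧ x ∉ F

/-- The link `lk_Δ(x)`. -/
def lkC {V : Type} (Δ : Finset V → Prop) (x : V) : Finset V → Prop :=
  fun F => x ∉ F ∧ Δ (insert x F)

/-! ## Independence complexes and regularity of graphs -/

/-- The independence complex of a graph, as a family of finsets. -/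
def indepFaces {V : Type} (G : SimpleGraph V) : Finset V → Prop :=
  fun F => ∀ u ∈ F, ∀ v ∈ F, ¬ G.Adj u v

/-- The regularity `reg(G)` of a graph: the regularity of its independence
complex over `k`. -/
def gReg {V : Type} [Fintype V] (k : Type) [Field k] (G : SimpleGraph V) : ℕ :=
  regC k (indepFaces G)

/-- The regularity of the subgraph of `G` induced on the vertex set `S`. -/
def gRegOn {V : Type} [Fintype V] (k : Type) [Field k] (G : SimpleGraph V)
    (S : Set V) : ℕ :=
  regC k (restrictC (indepFaces G) S)

/-! ## Geometric realization, suspension, wedge -/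

/-- The geometric realization of a family of finsets `Δ` on a finite vertex
type: convex combinations of vertices supported on a face. -/
abbrev cxSpace {V : Type} [Fintype V] (Δ : Finset V → Prop) : Type :=
  {f : V → ℝ // (∃ F : Finset V, Δ F ∧ ∀ v, f v ≠ 0 → v ∈ F) ∧
    (∀ v, 0 ≤ f v) ∧ ∑ v, f v = 1}

/-- Relation generating the unreduced suspension: the two ends of the cylinder
are collapsed to two (always present) poles. -/
def suspRel (X : Type) : (X × unitInterval ⊕ Bool) → (X × unitInterval ⊕ Bool) → Prop
  | Sum.inl (x, t), Sum.inr b => (t = 0 ∧ b = false) ∨ (t = 1 ∧ b = true)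
  | _, _ => False

/-- The unreduced suspension `Σ X` (the join of `X` with a two-point space). -/
abbrev Susp (X : Type) [TopologicalSpace X] : Type := Quot (suspRel X)

/-- Relation generating the wedge sum with respect to chosen basepoints. -/
def wedgeRel (X Y : Type) (x₀ : X) (y₀ : Y) : X ⊕ Y → X ⊕ Y → Prop :=
  fun p q => p = Sum.inl x₀ ∧ q = Sum.inr y₀

/-- The wedge sum `X ∨ Y` with respect to chosen basepoints. -/
abbrev Wedge (X Y : Type) [TopologicalSpace X] [TopologicalSpace Y]
    (x₀ : X) (y₀ : Y) : Type := Quot (wedgeRel X Y x₀ y₀)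

/-! ## Graph invariants -/

/-- `M` is an induced matching of `G`: a set of edges, pairwise with distinct
endpoints and with no edge of `G` between the endpoints of distinct members. -/
def IsInducedMatching {V : Type} (G : SimpleGraph V) (M : Finset (V × V)) : Prop :=
  (∀ p ∈ M, G.Adj p.1 p.2) ∧
    ∀ p ∈ M, ∀ q ∈ M, p ≠ q →
      p.1 ≠ q.1 ∧ p.1 ≠ q.2 ∧ p.2 ≠ q.1 ∧ p.2 ≠ q.2 ∧
      ¬ G.Adj p.1 q.1 ∧ ¬ G.Adj p.1 q.2 ∧ ¬ G.Adj p.2 q.1 ∧ ¬ G.Adj p.2 q.2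

/-- The induced matching number `im(G)`. -/
def inducedMatchingNumber {V : Type} (G : SimpleGraph V) : ℕ :=
  sSup {n : ℕ | ∃ M : Finset (V × V), IsInducedMatching G M ∧ M.card = n}

/-- The independence number `α(G)`. -/
def indepNumber {V : Type} (G : SimpleGraph V) : ℕ :=
  sSup {n : ℕ | ∃ s : Finset V, (∀ u ∈ s, ∀ v ∈ s, ¬ G.Adj u v) ∧ s.card = n}

/-- The decycling number `∇(G)`: the least size of a set of vertices whose
removal leaves an acyclic graph. -/
def decyclingNumber {V : Type} [Fintype V] (G : SimpleGraph V) : ℕ :=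
  sInf {n : ℕ | ∃ D : Finset V, D.card = n ∧
    (G.induce {v : V | v ∉ D}).IsAcyclic}

/-- `K` contains an induced cycle on `n` vertices. -/
def HasInducedCycle {V : Type} (K : SimpleGraph V) (n : ℕ) : Prop :=
  ∃ f : Fin n ↪ V, ∀ i j : Fin n,
    K.Adj (f i) (f j) ↔ ((j : ℕ) = ((i : ℕ) + 1) % n ∨ (i : ℕ) = ((j : ℕ) + 1) % n)

/-- A graph is cochordal if its complement is chordal, i.e. the complement has
no induced cycle of length at least `4`. -/
def Cochordal {V : Type} (H : SimpleGraph V) : Prop :=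
  ∀ n : ℕ, 4 ≤ n → ¬ HasInducedCycle Hᶜ n

/-- The cochordal cover number `cochord(G)`: the least number of cochordal
subgraphs of `G` whose edge sets cover the edges of `G`. -/
def cochordCover {V : Type} (G : SimpleGraph V) : ℕ :=
  sInf {r : ℕ | ∃ H : Fin r → SimpleGraph V,
    (∀ i, H i ≤ G ∧ Cochordal (H i)) ∧ ∀ u v, G.Adj u v → ∃ i, (H i).Adj u v}

/-- The graph `G*` on the edge set of `G`: two edges are adjacent iff the
subgraph induced by their endpoints is `2K₂` (disjoint, with no cross edges). -/
def starGraph {V : Type} (G : SimpleGraph V) : SimpleGraph G.edgeSet :=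
  SimpleGraph.fromRel fun e f =>
    ∀ a ∈ (e.1 : Sym2 V), ∀ b ∈ (f.1 : Sym2 V), a ≠ b ∧ ¬ G.Adj a b

/-- The chromatic number, as a natural number. -/
def chromNum {W : Type} (H : SimpleGraph W) : ℕ :=
  sInf {n : ℕ | ∃ c : W → Fin n, ∀ u v, H.Adj u v → c u ≠ c v}

/-- The clique number `ω`. -/
def cliqueNum {W : Type} (H : SimpleGraph W) : ℕ :=
  sSup {n : ℕ | ∃ s : Finset W, H.IsNClique n s}

/-- A graph is perfect if every induced subgraph has chromatic number equal to
its clique number. -/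
def IsPerfect {W : Type} (H : SimpleGraph W) : Prop :=
  ∀ A : Set W, chromNum (H.induce A) = cliqueNum (H.induce A)

/-! ## Lozin transform, triple subdivision, whiskers -/

/-- Generating relation for the Lozin transform `L_x(G; Y, Z)`: delete `x`,
add the path `y(=0) - a(=1) - b(=2) - z(=3)` on four new vertices, join `y`
to every vertex of `Y` and `z` to every vertex of `Z`. -/
def lozinRel {V : Type} (G : SimpleGraph V) (x : V) (Y Z : Set V) :
    ({w : V // w ≠ x} ⊕ Fin 4) → ({w : V // w ≠ x} ⊕ Fin 4) → Prop
  | Sum.inl u, Sum.inl w => G.Adj u.1 w.1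
  | Sum.inl u, Sum.inr i => (i = 0 ∧ u.1 ∈ Y) ∨ (i = 3 ∧ u.1 ∈ Z)
  | Sum.inr i, Sum.inr j => (i : ℕ) + 1 = (j : ℕ)
  | _, _ => False

/-- The Lozin transform `L_x(G; Y, Z)` of `G` at the vertex `x`. -/
def lozinModel {V : Type} (G : SimpleGraph V) (x : V) (Y Z : Set V) :
    SimpleGraph ({w : V // w ≠ x} ⊕ Fin 4) :=
  SimpleGraph.fromRel (lozinRel G x Y Z)

/-- `{Y, Z}` is a partition of the open neighborhood of `x`. -/
def IsLozinPartition {V : Type} (G : SimpleGraph V) (x : V) (Y Z : Set V) : Prop :=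
  Y ∪ Z = G.neighborSet x ∧ Disjoint Y Z

/-- Generating relation for the triple subdivision of the edge `(u,v)`:
the edge `uv` is removed and replaced by the path `u - y(=0) - a(=1) - b(=2) - v`. -/
def tripleSubRel {V : Type} (G : SimpleGraph V) (u v : V) :
    (V ⊕ Fin 3) → (V ⊕ Fin 3) → Prop
  | Sum.inl a, Sum.inl b => G.Adj a b ∧ ¬(a = u ∧ b = v) ∧ ¬(a = v ∧ b = u)
  | Sum.inl a, Sum.inr i => (a = u ∧ i = 0) ∨ (a = v ∧ i = 2)
  | Sum.inr i, Sum.inr j => (i : ℕ) + 1 = (j : ℕ)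
  | _, _ => False

/-- The triple subdivision `L(G; e)` of `G` at the edge `e = (u,v)`. -/
def tripleSub {V : Type} (G : SimpleGraph V) (u v : V) : SimpleGraph (V ⊕ Fin 3) :=
  SimpleGraph.fromRel (tripleSubRel G u v)

/-- Generating relation for the whisker `W_S(G)`: attach a new pendant vertex
to each vertex of `S`. -/
def whiskerSRel {V : Type} (G : SimpleGraph V) (S : Finset V) :
    (V ⊕ {s : V // s ∈ S}) → (V ⊕ {s : V // s ∈ S}) → Prop
  | Sum.inl a, Sum.inl b => G.Adj a b
  | Sum.inl a, Sum.inr s => a = s.1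
  | _, _ => False

/-- The whisker graph `W_S(G)` on `V ⊕ S`. -/
def whiskerS {V : Type} (G : SimpleGraph V) (S : Finset V) :
    SimpleGraph (V ⊕ {s : V // s ∈ S}) :=
  SimpleGraph.fromRel (whiskerSRel G S)

/-- Generating relation for the full whisker `W(G)`: attach a pendant vertex
to every vertex. -/
def whiskerRel {V : Type} (G : SimpleGraph V) : (V ⊕ V) → (V ⊕ V) → Prop
  | Sum.inl a, Sum.inl b => G.Adj a b
  | Sum.inl a, Sum.inr b => a = b
  | _, _ => False

/-- The full whisker graph `W(G)` on `V ⊕ V`. -/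
def whiskerGraph {V : Type} (G : SimpleGraph V) : SimpleGraph (V ⊕ V) :=
  SimpleGraph.fromRel (whiskerRel G)

/-! ## Vertex decomposability -/

/-- The closed neighborhood of `x` inside the finset `A`. -/
def closedNbrOn {V : Type} (G : SimpleGraph V) (A : Finset V) (x : V) : Finset V :=
  A.filter fun z => z = x ∨ G.Adj x z

/-- `T` is an independent set of `G`. -/
def IsIndepFinset {V : Type} (G : SimpleGraph V) (T : Finset V) : Prop :=
  ∀ u ∈ T, ∀ v ∈ T, ¬ G.Adj u v

/-- `x` is a shedding vertex of the induced subgraph `G[A]`. -/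
def IsSheddingOn {V : Type} (G : SimpleGraph V) (A : Finset V) (x : V) : Prop :=
  ∀ T ⊆ A \ closedNbrOn G A x, IsIndepFinset G T →
    ∃ w ∈ A, G.Adj x w ∧ IsIndepFinset G (insert w T)

/-- Vertex decomposability of the induced subgraph `G[A]`. -/
def VDOn {V : Type} (G : SimpleGraph V) : Finset V → Prop := fun A =>
  (∀ u ∈ A, ∀ v ∈ A, ¬ G.Adj u v) ∨
    ∃ x : {y : V // y ∈ A}, IsSheddingOn G A x.1 ∧
      VDOn G (A.erase x.1) ∧ VDOn G (A \ closedNbrOn G A x.1)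
termination_by A => A.card
decreasing_by
  · exact Finset.card_erase_lt_of_mem x.2
  · refine Finset.card_lt_card ?_
    refine (Finset.ssubset_iff_of_subset Finset.sdiff_subset).2 ⟨x.1, x.2, ?_⟩
    simp [closedNbrOn, x.2]

end

/-- A single-edge graph is cochordal. -/
lemma singleEdge_cochordal {V : Type} (u v : V) (huv : u ≠ v) :
    Cochordal (SimpleGraph.fromEdgeSet {s(u, v)}) := by
  intro n hn ⟨f, hf⟩
  have h1n : 1 % n = 1 := Nat.mod_eq_of_lt (by omega)
  have h2n : 2 % n = 2 := Nat.mod_eq_of_lt (by omega)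
  have h3n : 3 % n = 3 := Nat.mod_eq_of_lt (by omega)
  have h02 := hf ⟨0, by omega⟩ ⟨2, by omega⟩
  have h13 := hf ⟨1, by omega⟩ ⟨3, by omega⟩
  simp only [SimpleGraph.compl_adj, Fin.mk.injEq] at h02 h13
  have hne02 : f ⟨0, by omega⟩ ≠ f ⟨2, by omega⟩ := by
    intro h; exact absurd (f.injective h) (by simp)
  have hne13 : f ⟨1, by omega⟩ ≠ f ⟨3, by omega⟩ := by
    intro h; exact absurd (f.injective h) (by simp)
  have hA : (SimpleGraph.fromEdgeSet {s(u, v)}).Adj (f ⟨0, by omega⟩) (f ⟨2, by omega⟩) := by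
    by_contra hc
    have := h02.mpr
    rw [h1n, h3n] at h02
    exact absurd (⟨hne02, hc⟩ : _ ∧ _) (by
      intro hx
      rcases h02.mp hx with h | h <;> omega)
  have hB : (SimpleGraph.fromEdgeSet {s(u, v)}).Adj (f ⟨1, by omega⟩) (f ⟨3, by omega⟩) := by
    by_contra hc
    rw [h2n] at h13
    have h4n : 4 % n ≠ 1 := by
      rcases Nat.lt_or_ge 4 n with h | h
      · rw [Nat.mod_eq_of_lt h]; omega
      · have : n = 4 := by omega
        simp [this]
    exact absurd (⟨hne13, hc⟩ : _ ∧ _) (by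
      intro hx
      rcases h13.mp hx with h | h
      · omega
      · exact h4n h.symm)
  rw [SimpleGraph.fromEdgeSet_adj] at hA hB
  have heq : s(f ⟨0, by omega⟩, f ⟨2, by omega⟩) = s(f ⟨1, by omega⟩, f ⟨3, by omega⟩) := by
    rw [hA.1, hB.1]
  rw [Sym2.eq_iff] at heq
  rcases heq with ⟨h, _⟩ | ⟨h, _⟩ <;>
    exact absurd (f.injective h) (by simp)

/-- Endpoints of an edge of `G`. -/
lemma edge_endpoints {V : Type} (G : SimpleGraph V) (e : G.edgeSet) :
    ∃ p : V × V, (e : Sym2 V) = s(p.1, p.2) := by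
  obtain ⟨s, hs⟩ := e
  induction s using Sym2.ind with
  | _ x y => exact ⟨(x, y), rfl⟩

/-- Any graph with finite vertex set has a cochordal edge cover. -/
lemma cochord_set_nonempty {V : Type} [Fintype V] (G : SimpleGraph V) :
    {r : ℕ | ∃ H : Fin r → SimpleGraph V,
      (∀ i, H i ≤ G ∧ Cochordal (H i)) ∧ ∀ u v, G.Adj u v → ∃ i, (H i).Adj u v}.Nonempty := by
  obtain ⟨r, ⟨eqv⟩⟩ := Finite.exists_equiv_fin G.edgeSet
  refine ⟨r, fun i => SimpleGraph.fromEdgeSet {((eqv.symm i : G.edgeSet) : Sym2 V)}, ?_, ?_⟩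
  · intro i
    constructor
    · intro a b hab
      rw [SimpleGraph.fromEdgeSet_adj] at hab
      have : s(a, b) ∈ G.edgeSet := by
        rw [Set.mem_singleton_iff.mp hab.1]; exact (eqv.symm i).2
      exact (SimpleGraph.mem_edgeSet G).mp this
    · obtain ⟨p, hp⟩ := edge_endpoints G (eqv.symm i)
      have hxy : p.1 ≠ p.2 := by
        have : s(p.1, p.2) ∈ G.edgeSet := hp ▸ (eqv.symm i).2
        exact ((SimpleGraph.mem_edgeSet G).mp this).ne
      show Cochordal (SimpleGraph.fromEdgeSet {((eqv.symm i : G.edgeSet) : Sym2 V)})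
      rw [hp]
      exact singleEdge_cochordal _ _ hxy
  · intro u v huv
    refine ⟨eqv ⟨s(u, v), huv⟩, ?_⟩
    rw [SimpleGraph.fromEdgeSet_adj]
    refine ⟨?_, huv.ne⟩
    simp

/-- For any graph `G` with at least one edge,
`χ(G*) ≤ cochord(G)`. -/
theorem chromNum_star_le_cochordCover {V : Type} [Fintype V] (G : SimpleGraph V)
    (he : G.edgeSet.Nonempty) :
    chromNum (starGraph G) ≤ cochordCover G := by
  refine le_csInf (cochord_set_nonempty G) ?_
  rintro r ⟨H, hH, hcov⟩
  -- choose endpoints for each edge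
  choose P hP using fun e => edge_endpoints G e
  have hGadj : ∀ e : G.edgeSet, G.Adj (P e).1 (P e).2 := fun e =>
    (SimpleGraph.mem_edgeSet G).mp (hP e ▸ e.2)
  -- the coloring
  choose c hc using fun e : G.edgeSet => hcov (P e).1 (P e).2 (hGadj e)
  apply Nat.sInf_le
  refine ⟨c, ?_⟩
  intro e f hadj heq
  rw [starGraph, SimpleGraph.fromRel_adj] at hadj
  obtain ⟨hne, hrel⟩ := hadj
  have hrel' : ∀ x ∈ (e : Sym2 V), ∀ y ∈ (f : Sym2 V), x ≠ y ∧ ¬ G.Adj x y := by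
    rcases hrel with h | h
    · exact h
    · intro x hx y hy
      obtain ⟨h1, h2⟩ := h y hy x hx
      exact ⟨h1.symm, fun hh => h2 hh.symm⟩
  set A := (P e).1 with hA
  set B := (P e).2 with hB
  set C := (P f).1 with hC
  set D := (P f).2 with hD
  have hAe : A ∈ (e : Sym2 V) := by rw [hP e]; exact Sym2.mem_mk_left _ _
  have hBe : B ∈ (e : Sym2 V) := by rw [hP e]; exact Sym2.mem_mk_right _ _
  have hCf : C ∈ (f : Sym2 V) := by rw [hP f]; exact Sym2.mem_mk_left _ _
  have hDf : D ∈ (f : Sym2 V) := by rw [hP f]; exact Sym2.mem_mk_right _ _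
  set i := c e with hi
  have hAB : (H i).Adj A B := hc e
  have hCD : (H i).Adj C D := heq ▸ hc f
  have hle := (hH i).1
  obtain ⟨hAC, hGAC⟩ := hrel' A hAe C hCf
  obtain ⟨hAD, hGAD⟩ := hrel' A hAe D hDf
  obtain ⟨hBC, hGBC⟩ := hrel' B hBe C hCf
  obtain ⟨hBD, hGBD⟩ := hrel' B hBe D hDf
  have nAC : ¬ (H i).Adj A C := fun h => hGAC (hle h)
  have nAD : ¬ (H i).Adj A D := fun h => hGAD (hle h)
  have nBC : ¬ (H i).Adj B C := fun h => hGBC (hle h)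
  have nBD : ¬ (H i).Adj B D := fun h => hGBD (hle h)
  have nCA : ¬ (H i).Adj C A := fun h => nAC h.symm
  have nDA : ¬ (H i).Adj D A := fun h => nAD h.symm
  have nCB : ¬ (H i).Adj C B := fun h => nBC h.symm
  have nDB : ¬ (H i).Adj D B := fun h => nBD h.symm
  have hABne : A ≠ B := hAB.ne
  have hCDne : C ≠ D := hCD.ne
  -- build induced C4 in (H i)ᶜ on A, C, B, D
  have hfinj : Function.Injective ![A, C, B, D] := by
    intro x y hxy
    fin_cases x <;> fin_cases y <;>
      simp only [Matrix.cons_val_zero, Matrix.cons_val_one, Matrix.head_cons,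
        Matrix.cons_val_two, Matrix.tail_cons, Matrix.cons_val_three] at hxy <;>
      first
        | rfl
        | exact absurd hxy hABne | exact absurd hxy hCDne | exact absurd hxy hAC
        | exact absurd hxy hAD | exact absurd hxy hBC | exact absurd hxy hBD
        | exact absurd hxy.symm hABne | exact absurd hxy.symm hCDne
        | exact absurd hxy.symm hAC | exact absurd hxy.symm hAD
        | exact absurd hxy.symm hBC | exact absurd hxy.symm hBD
  have hcyc : HasInducedCycle (H i)ᶜ 4 := by
    refine ⟨⟨![A, C, B, D], hfinj⟩, ?_⟩
    intro x y
    fin_cases x <;> fin_cases y <;>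
      simp only [Function.Embedding.coeFn_mk, Matrix.cons_val_zero, Matrix.cons_val_one,
        Matrix.head_cons, Matrix.cons_val_two, Matrix.tail_cons, Matrix.cons_val_three,
        SimpleGraph.compl_adj, Fin.isValue, Fin.val_zero, Fin.val_one, Fin.val_two] <;>
      norm_num <;>
      first
        | exact (H i).irrefl
        | exact fun h => absurd rfl h
        | exact ⟨hAC, nAC⟩ | exact ⟨hAD, nAD⟩ | exact ⟨hBC, nBC⟩ | exact ⟨hBD, nBD⟩
        | exact ⟨hAC.symm, nCA⟩ | exact ⟨hAD.symm, nDA⟩ | exact ⟨hBC.symm, nCB⟩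
        | exact ⟨hBD.symm, nDB⟩
        | exact fun _ => hAB | exact fun _ => hCD
        | exact fun _ => hAB.symm | exact fun _ => hCD.symm
        | (intro h; exact h.2 hAB) | (intro h; exact h.2 hCD)
        | (intro h; exact h.2 hAB.symm) | (intro h; exact h.2 hCD.symm)
        | (constructor <;> first
            | exact hAC | exact hAD | exact hBC | exact hBD
            | exact hAC.symm | exact hAD.symm | exact hBC.symm | exact hBD.symm
            | exact nAC | exact nAD | exact nBC | exact nBD
            | exact nCA | exact nDA | exact nCB | exact nDB)
  exact (hH i).2 4 le_rfl hcyc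
end

section
/- Let G be a graph and e = (u,v) an edge of G. If L(G;e) denotes the graph obtained from G by replacing the edge e with an induced path u − y − a − b − v through three new vertices (triple subdivision of e), then the decycling numbers satisfy ∇(L(G;e)) = ∇(G). -/
open scoped Classical

open SimpleGraph
namespace TSubAux

section helpers
variable {V : Type} {G : SimpleGraph V} {u v : V}

lemma tadj_ll {a b : V} :
    (tripleSub G u v).Adj (Sum.inl a) (Sum.inl b) ↔
      G.Adj a b ∧ ¬(a = u ∧ b = v) ∧ ¬(a = v ∧ b = u) := by
  simp only [tripleSub, fromRel_adj, tripleSubRel, ne_eq, Sum.inl.injEq]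
  constructor
  · rintro ⟨hne, h | h⟩
    · exact h
    · exact ⟨h.1.symm, fun hh => h.2.2 ⟨hh.2, hh.1⟩, fun hh => h.2.1 ⟨hh.2, hh.1⟩⟩
  · rintro ⟨h1, h2, h3⟩
    exact ⟨h1.ne, Or.inl ⟨h1, h2, h3⟩⟩

lemma tadj_lr {a : V} {i : Fin 3} :
    (tripleSub G u v).Adj (Sum.inl a) (Sum.inr i) ↔ (a = u ∧ i = 0) ∨ (a = v ∧ i = 2) := by
  simp [tripleSub, fromRel_adj, tripleSubRel]

lemma tadj_rr {i j : Fin 3} :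
    (tripleSub G u v).Adj (Sum.inr i) (Sum.inr j) ↔
      ((i : ℕ) + 1 = (j : ℕ) ∨ (j : ℕ) + 1 = (i : ℕ)) := by
  simp only [tripleSub, fromRel_adj, tripleSubRel, ne_eq, Sum.inr.injEq]
  constructor
  · rintro ⟨-, h⟩; exact h
  · intro h'
    refine ⟨fun hh => ?_, h'⟩
    subst hh
    rcases h' with h' | h' <;> omega

lemma tadj_rl {a : V} {i : Fin 3} :
    (tripleSub G u v).Adj (Sum.inr i) (Sum.inl a) ↔ (a = u ∧ i = 0) ∨ (a = v ∧ i = 2) := by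
  rw [adj_comm]; exact tadj_lr

end helpers

section main
variable {V : Type} {G : SimpleGraph V} {u v : V}

lemma reach_transport {A B : Type*} {H : SimpleGraph A} {K : SimpleGraph B}
    (f : A → B) (hf : ∀ x y, H.Adj x y → K.Reachable (f x) (f y)) {a b : A}
    (hr : H.Reachable a b) : K.Reachable (f a) (f b) := by
  obtain ⟨w⟩ := hr
  induction w with
  | nil => exact Reachable.refl _
  | cons hadj p ih => exact (hf _ _ hadj).trans ih

lemma sep_transport {A : Type*} {H : SimpleGraph A} (P : A → Prop)
    (hf : ∀ x y, H.Adj x y → (P x ↔ P y)) {a b : A}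
    (hr : H.Reachable a b) : P a ↔ P b := by
  obtain ⟨w⟩ := hr
  induction w with
  | nil => rfl
  | cons hadj p ih => exact (hf _ _ hadj).trans ih

lemma del_adj {W : Type*} (K : SimpleGraph W) (e : Sym2 W) {p q : W} :
    (K \ fromEdgeSet {e}).Adj p q ↔ K.Adj p q ∧ s(p,q) ≠ e := by
  simp only [sdiff_adj, fromEdgeSet_adj, Set.mem_singleton_iff]
  constructor
  · rintro ⟨h1, h2⟩; exact ⟨h1, fun he => h2 ⟨he, h1.ne⟩⟩
  · rintro ⟨h1, h2⟩; exact ⟨h1, fun hh => h2 hh.1⟩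

lemma sym2_sub_eq_iff {W : Type*} {S : Set W} {a b c d : W} {ha : a ∈ S} {hb : b ∈ S}
    {hc : c ∈ S} {hd : d ∈ S} :
    (s((⟨a,ha⟩ : ↥S),⟨b,hb⟩) = s(⟨c,hc⟩,⟨d,hd⟩)) ↔ ((a = c ∧ b = d) ∨ (a = d ∧ b = c)) := by
  simp [Sym2.eq_iff, Subtype.ext_iff]

lemma bridge_induce {S : Set V} (hS : (G.induce S).IsAcyclic) {a b : V}
    (ha : a ∈ S) (hb : b ∈ S) (hab : G.Adj a b) :
    ¬ ((G.induce S) \ fromEdgeSet {s((⟨a,ha⟩ : ↥S),⟨b,hb⟩)}).Reachable ⟨a,ha⟩ ⟨b,hb⟩ := by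
  have hab' : (G.induce S).Adj ⟨a,ha⟩ ⟨b,hb⟩ := hab
  exact (isBridge_iff.mp ((isAcyclic_iff_forall_adj_isBridge.mp hS) hab'))

end main
section blockA
variable {V : Type} {G : SimpleGraph V} {u v : V}

lemma noreachA (h : G.Adj u v) {D : Finset V}
    (hD : (G.induce {w : V | w ∉ D}).IsAcyclic)
    {a b : V} (ha : (Sum.inl a : V ⊕ Fin 3) ∈ {x : V ⊕ Fin 3 | x ∉ D.image Sum.inl})
    (hb : (Sum.inl b : V ⊕ Fin 3) ∈ {x : V ⊕ Fin 3 | x ∉ D.image Sum.inl})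
    (hab : G.Adj a b) (h1 : ¬(a = u ∧ b = v)) (h2 : ¬(a = v ∧ b = u)) :
    ¬ (((tripleSub G u v).induce {x : V ⊕ Fin 3 | x ∉ D.image Sum.inl}) \
        fromEdgeSet {s(⟨Sum.inl a, ha⟩, ⟨Sum.inl b, hb⟩)}).Reachable
      ⟨Sum.inl a, ha⟩ ⟨Sum.inl b, hb⟩ := by
  intro hre
  have haD : a ∉ D := by simpa using ha
  have hbD : b ∉ D := by simpa using hb
  obtain ⟨c, hc, hcu, hcv⟩ :
      ∃ (c : V) (hc : c ∈ {w : V | w ∉ D}),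
        (∀ hu : u ∈ {w : V | w ∉ D},
          ((G.induce {w : V | w ∉ D}) \
            fromEdgeSet {s((⟨a, haD⟩ : {w : V | w ∉ D}), ⟨b, hbD⟩)}).Reachable ⟨u, hu⟩ ⟨c, hc⟩) ∧
        (∀ hv : v ∈ {w : V | w ∉ D},
          ((G.induce {w : V | w ∉ D}) \
            fromEdgeSet {s((⟨a, haD⟩ : {w : V | w ∉ D}), ⟨b, hbD⟩)}).Reachable ⟨c, hc⟩ ⟨v, hv⟩) := by
    by_cases hu : u ∈ D
    · by_cases hv : v ∈ D
      · exact ⟨a, haD, fun hu' => absurd hu hu', fun hv' => absurd hv hv'⟩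
      · exact ⟨v, hv, fun hu' => absurd hu hu', fun _ => Reachable.refl _⟩
    · refine ⟨u, hu, fun _ => Reachable.refl _, fun hv => Adj.reachable ?_⟩
      rw [del_adj]
      refine ⟨h, ?_⟩
      rw [Ne, sym2_sub_eq_iff]
      tauto
  let f : ↥{x : V ⊕ Fin 3 | x ∉ D.image Sum.inl} → ↥{w : V | w ∉ D} := fun z =>
    match z with
    | ⟨Sum.inl w, hw⟩ => ⟨w, by simpa using hw⟩
    | ⟨Sum.inr _, _⟩ => ⟨c, hc⟩
  have hedge : ∀ p q, ((((tripleSub G u v).induce {x : V ⊕ Fin 3 | x ∉ D.image Sum.inl}) \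
        fromEdgeSet {s(⟨Sum.inl a, ha⟩, ⟨Sum.inl b, hb⟩)})).Adj p q →
      ((G.induce {w : V | w ∉ D}) \
        fromEdgeSet {s((⟨a, haD⟩ : {w : V | w ∉ D}), ⟨b, hbD⟩)}).Reachable (f p) (f q) := by
    rintro ⟨(w | i), hp⟩ ⟨(z | j), hq⟩ hpq
    all_goals rw [del_adj] at hpq
    all_goals obtain ⟨hadj, hne⟩ := hpq
    · have hwz := tadj_ll.mp hadj
      refine Adj.reachable ?_
      rw [del_adj]
      refine ⟨hwz.1, ?_⟩
      rw [Ne, sym2_sub_eq_iff]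
      intro hh
      apply hne
      rw [sym2_sub_eq_iff]
      simp only [Sum.inl.injEq]
      exact hh
    · rcases tadj_lr.mp hadj with ⟨rfl, rfl⟩ | ⟨rfl, rfl⟩
      · exact hcu (by simpa using hp)
      · exact (hcv (by simpa using hp)).symm
    · rcases tadj_rl.mp hadj with ⟨rfl, rfl⟩ | ⟨rfl, rfl⟩
      · exact (hcu (by simpa using hq)).symm
      · exact hcv (by simpa using hq)
  exact bridge_induce hD haD hbD hab (reach_transport f hedge hre)

end blockA
section blockB
variable {V : Type} {G : SimpleGraph V} {u v : V}

lemma fin3_succ {i j : Fin 3} (hn : (i:ℕ) + 1 = (j:ℕ)) :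
    (i = 0 ∧ j = 1) ∨ (i = 1 ∧ j = 2) := by
  have h3 := i.isLt; have h4 := j.isLt
  rcases (show ((i:ℕ) = 0 ∧ (j:ℕ) = 1) ∨ ((i:ℕ) = 1 ∧ (j:ℕ) = 2) by omega) with
    ⟨hi, hj⟩ | ⟨hi, hj⟩
  · exact Or.inl ⟨Fin.ext (by simp [hi]), Fin.ext (by simp [hj])⟩
  · exact Or.inr ⟨Fin.ext (by simp [hi]), Fin.ext (by simp [hj])⟩

lemma noreachB (h : G.Adj u v) {D : Finset V}
    (hD : (G.induce {w : V | w ∉ D}).IsAcyclic)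
    (hu' : (Sum.inl u : V ⊕ Fin 3) ∈ {x : V ⊕ Fin 3 | x ∉ D.image Sum.inl})
    (h0 : (Sum.inr 0 : V ⊕ Fin 3) ∈ {x : V ⊕ Fin 3 | x ∉ D.image Sum.inl}) :
    ¬ (((tripleSub G u v).induce {x : V ⊕ Fin 3 | x ∉ D.image Sum.inl}) \
        fromEdgeSet {s(⟨Sum.inl u, hu'⟩, ⟨Sum.inr 0, h0⟩)}).Reachable
      ⟨Sum.inl u, hu'⟩ ⟨Sum.inr 0, h0⟩ := by
  intro hre
  have huD : u ∉ D := by simpa using hu'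
  by_cases hv : v ∈ D
  · have hsep : (Sum.isRight (Sum.inl u : V ⊕ Fin 3) = true) ↔
        (Sum.isRight (Sum.inr (0 : Fin 3) : V ⊕ Fin 3) = true) := by
      refine sep_transport (fun z => z.1.isRight = true) ?_ hre
      rintro ⟨(w | i), hp⟩ ⟨(z | j), hq⟩ hpq <;> rw [del_adj] at hpq <;>
        obtain ⟨hadj, hne⟩ := hpq
      · simp
      · rcases tadj_lr.mp hadj with ⟨rfl, rfl⟩ | ⟨rfl, rfl⟩
        · exact absurd rfl hne
        · exact absurd hv (by simpa using hp)
      · rcases tadj_rl.mp hadj with ⟨rfl, rfl⟩ | ⟨rfl, rfl⟩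
        · exact absurd Sym2.eq_swap hne
        · exact absurd hv (by simpa using hq)
      · simp
    simp at hsep
  · let f : ↥{x : V ⊕ Fin 3 | x ∉ D.image Sum.inl} → ↥{w : V | w ∉ D} := fun z =>
      match z with
      | ⟨Sum.inl w, hw⟩ => ⟨w, by simpa using hw⟩
      | ⟨Sum.inr _, _⟩ => ⟨v, hv⟩
    have hedge : ∀ p q, ((((tripleSub G u v).induce {x : V ⊕ Fin 3 | x ∉ D.image Sum.inl}) \
          fromEdgeSet {s(⟨Sum.inl u, hu'⟩, ⟨Sum.inr 0, h0⟩)})).Adj p q →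
        ((G.induce {w : V | w ∉ D}) \
          fromEdgeSet {s((⟨u, huD⟩ : {w : V | w ∉ D}), ⟨v, hv⟩)}).Reachable (f p) (f q) := by
      rintro ⟨(w | i), hp⟩ ⟨(z | j), hq⟩ hpq <;> rw [del_adj] at hpq <;>
        obtain ⟨hadj, hne⟩ := hpq
      · have hwz := tadj_ll.mp hadj
        refine Adj.reachable ?_
        rw [del_adj]
        refine ⟨hwz.1, ?_⟩
        rw [Ne, sym2_sub_eq_iff]
        rcases hwz with ⟨-, h1, h2⟩
        tauto
      · rcases tadj_lr.mp hadj with ⟨rfl, rfl⟩ | ⟨rfl, rfl⟩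
        · exact absurd rfl hne
        · exact Reachable.refl _
      · rcases tadj_rl.mp hadj with ⟨rfl, rfl⟩ | ⟨rfl, rfl⟩
        · exact absurd Sym2.eq_swap hne
        · exact Reachable.refl _
    exact bridge_induce hD huD hv h (reach_transport f hedge hre)

lemma noreachB' (h : G.Adj u v) {D : Finset V}
    (hD : (G.induce {w : V | w ∉ D}).IsAcyclic)
    (h2 : (Sum.inr 2 : V ⊕ Fin 3) ∈ {x : V ⊕ Fin 3 | x ∉ D.image Sum.inl})
    (hv' : (Sum.inl v : V ⊕ Fin 3) ∈ {x : V ⊕ Fin 3 | x ∉ D.image Sum.inl}) :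
    ¬ (((tripleSub G u v).induce {x : V ⊕ Fin 3 | x ∉ D.image Sum.inl}) \
        fromEdgeSet {s(⟨Sum.inr 2, h2⟩, ⟨Sum.inl v, hv'⟩)}).Reachable
      ⟨Sum.inr 2, h2⟩ ⟨Sum.inl v, hv'⟩ := by
  intro hre
  have hvD : v ∉ D := by simpa using hv'
  by_cases hu : u ∈ D
  · have hsep : (Sum.isRight (Sum.inr (2 : Fin 3) : V ⊕ Fin 3) = true) ↔
        (Sum.isRight (Sum.inl v : V ⊕ Fin 3) = true) := by
      refine sep_transport (fun z => z.1.isRight = true) ?_ hre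
      rintro ⟨(w | i), hp⟩ ⟨(z | j), hq⟩ hpq <;> rw [del_adj] at hpq <;>
        obtain ⟨hadj, hne⟩ := hpq
      · simp
      · rcases tadj_lr.mp hadj with ⟨rfl, rfl⟩ | ⟨rfl, rfl⟩
        · exact absurd hu (by simpa using hp)
        · exact absurd Sym2.eq_swap hne
      · rcases tadj_rl.mp hadj with ⟨rfl, rfl⟩ | ⟨rfl, rfl⟩
        · exact absurd hu (by simpa using hq)
        · exact absurd rfl hne
      · simp
    simp at hsep
  · let f : ↥{x : V ⊕ Fin 3 | x ∉ D.image Sum.inl} → ↥{w : V | w ∉ D} := fun z =>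
      match z with
      | ⟨Sum.inl w, hw⟩ => ⟨w, by simpa using hw⟩
      | ⟨Sum.inr _, _⟩ => ⟨u, hu⟩
    have hedge : ∀ p q, ((((tripleSub G u v).induce {x : V ⊕ Fin 3 | x ∉ D.image Sum.inl}) \
          fromEdgeSet {s(⟨Sum.inr 2, h2⟩, ⟨Sum.inl v, hv'⟩)})).Adj p q →
        ((G.induce {w : V | w ∉ D}) \
          fromEdgeSet {s((⟨u, hu⟩ : {w : V | w ∉ D}), ⟨v, hvD⟩)}).Reachable (f p) (f q) := by
      rintro ⟨(w | i), hp⟩ ⟨(z | j), hq⟩ hpq <;> rw [del_adj] at hpq <;>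
        obtain ⟨hadj, hne⟩ := hpq
      · have hwz := tadj_ll.mp hadj
        refine Adj.reachable ?_
        rw [del_adj]
        refine ⟨hwz.1, ?_⟩
        rw [Ne, sym2_sub_eq_iff]
        rcases hwz with ⟨-, h1', h2'⟩
        tauto
      · rcases tadj_lr.mp hadj with ⟨rfl, rfl⟩ | ⟨rfl, rfl⟩
        · exact Reachable.refl _
        · exact absurd Sym2.eq_swap hne
      · rcases tadj_rl.mp hadj with ⟨rfl, rfl⟩ | ⟨rfl, rfl⟩
        · exact Reachable.refl _
        · exact absurd rfl hne
    exact bridge_induce hD hu hvD h (reach_transport f hedge hre)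

end blockB
section blockC
variable {V : Type} {G : SimpleGraph V} {u v : V}

lemma noreachC (h : G.Adj u v) {D : Finset V}
    (hD : (G.induce {w : V | w ∉ D}).IsAcyclic)
    (h0 : (Sum.inr 0 : V ⊕ Fin 3) ∈ {x : V ⊕ Fin 3 | x ∉ D.image Sum.inl})
    (h1' : (Sum.inr 1 : V ⊕ Fin 3) ∈ {x : V ⊕ Fin 3 | x ∉ D.image Sum.inl}) :
    ¬ (((tripleSub G u v).induce {x : V ⊕ Fin 3 | x ∉ D.image Sum.inl}) \
        fromEdgeSet {s(⟨Sum.inr 0, h0⟩, ⟨Sum.inr 1, h1'⟩)}).Reachable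
      ⟨Sum.inr 0, h0⟩ ⟨Sum.inr 1, h1'⟩ := by
  intro hre
  by_cases hu : u ∈ D
  · have hsep : ((Sum.inr 0 : V ⊕ Fin 3) = Sum.inr 0) ↔
        ((Sum.inr 1 : V ⊕ Fin 3) = Sum.inr 0) := by
      refine sep_transport (fun z => z.1 = Sum.inr 0) ?_ hre
      rintro ⟨(w | i), hp⟩ ⟨(z | j), hq⟩ hpq <;> rw [del_adj] at hpq <;>
        obtain ⟨hadj, hne⟩ := hpq
      · simp
      · rcases tadj_lr.mp hadj with ⟨rfl, rfl⟩ | ⟨rfl, rfl⟩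
        · exact absurd hu (by simpa using hp)
        · simp
      · rcases tadj_rl.mp hadj with ⟨rfl, rfl⟩ | ⟨rfl, rfl⟩
        · exact absurd hu (by simpa using hq)
        · simp
      · rcases tadj_rr.mp hadj with hn | hn
        · rcases fin3_succ hn with ⟨rfl, rfl⟩ | ⟨rfl, rfl⟩
          · exact absurd rfl hne
          · simp
        · rcases fin3_succ hn with ⟨rfl, rfl⟩ | ⟨rfl, rfl⟩
          · exact absurd Sym2.eq_swap hne
          · simp
    simp at hsep
  · by_cases hv : v ∈ D
    · have hsep : ((Sum.inr 0 : V ⊕ Fin 3) = Sum.inr 1 ∨ (Sum.inr 0 : V ⊕ Fin 3) = Sum.inr 2) ↔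
          ((Sum.inr 1 : V ⊕ Fin 3) = Sum.inr 1 ∨ (Sum.inr 1 : V ⊕ Fin 3) = Sum.inr 2) := by
        refine sep_transport (fun z => z.1 = Sum.inr 1 ∨ z.1 = Sum.inr 2) ?_ hre
        rintro ⟨(w | i), hp⟩ ⟨(z | j), hq⟩ hpq <;> rw [del_adj] at hpq <;>
          obtain ⟨hadj, hne⟩ := hpq
        · simp
        · rcases tadj_lr.mp hadj with ⟨rfl, rfl⟩ | ⟨rfl, rfl⟩
          · simp
          · exact absurd hv (by simpa using hp)
        · rcases tadj_rl.mp hadj with ⟨rfl, rfl⟩ | ⟨rfl, rfl⟩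
          · simp
          · exact absurd hv (by simpa using hq)
        · rcases tadj_rr.mp hadj with hn | hn
          · rcases fin3_succ hn with ⟨rfl, rfl⟩ | ⟨rfl, rfl⟩
            · exact absurd rfl hne
            · simp
          · rcases fin3_succ hn with ⟨rfl, rfl⟩ | ⟨rfl, rfl⟩
            · exact absurd Sym2.eq_swap hne
            · simp
      simp at hsep
    · let f : ↥{x : V ⊕ Fin 3 | x ∉ D.image Sum.inl} → ↥{w : V | w ∉ D} := fun z =>
        match z with
        | ⟨Sum.inl w, hw⟩ => ⟨w, by simpa using hw⟩
        | ⟨Sum.inr i, _⟩ => if (i : ℕ) = 0 then ⟨u, hu⟩ else ⟨v, hv⟩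
      have hedge : ∀ p q, ((((tripleSub G u v).induce {x : V ⊕ Fin 3 | x ∉ D.image Sum.inl}) \
            fromEdgeSet {s(⟨Sum.inr 0, h0⟩, ⟨Sum.inr 1, h1'⟩)})).Adj p q →
          ((G.induce {w : V | w ∉ D}) \
            fromEdgeSet {s((⟨u, hu⟩ : {w : V | w ∉ D}), ⟨v, hv⟩)}).Reachable (f p) (f q) := by
        rintro ⟨(w | i), hp⟩ ⟨(z | j), hq⟩ hpq <;> rw [del_adj] at hpq <;>
          obtain ⟨hadj, hne⟩ := hpq
        · have hwz := tadj_ll.mp hadj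
          refine Adj.reachable ?_
          rw [del_adj]
          refine ⟨hwz.1, ?_⟩
          rw [Ne, sym2_sub_eq_iff]
          rcases hwz with ⟨-, h1, h2⟩
          tauto
        · rcases tadj_lr.mp hadj with ⟨rfl, rfl⟩ | ⟨rfl, rfl⟩
          · exact Reachable.refl _
          · exact Reachable.refl _
        · rcases tadj_rl.mp hadj with ⟨rfl, rfl⟩ | ⟨rfl, rfl⟩
          · exact Reachable.refl _
          · exact Reachable.refl _
        · rcases tadj_rr.mp hadj with hn | hn
          · rcases fin3_succ hn with ⟨rfl, rfl⟩ | ⟨rfl, rfl⟩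
            · exact absurd rfl hne
            · exact Reachable.refl _
          · rcases fin3_succ hn with ⟨rfl, rfl⟩ | ⟨rfl, rfl⟩
            · exact absurd Sym2.eq_swap hne
            · exact Reachable.refl _
      exact bridge_induce hD hu hv h (reach_transport f hedge hre)

lemma noreachD (h : G.Adj u v) {D : Finset V}
    (hD : (G.induce {w : V | w ∉ D}).IsAcyclic)
    (h1' : (Sum.inr 1 : V ⊕ Fin 3) ∈ {x : V ⊕ Fin 3 | x ∉ D.image Sum.inl})
    (h2' : (Sum.inr 2 : V ⊕ Fin 3) ∈ {x : V ⊕ Fin 3 | x ∉ D.image Sum.inl}) :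
    ¬ (((tripleSub G u v).induce {x : V ⊕ Fin 3 | x ∉ D.image Sum.inl}) \
        fromEdgeSet {s(⟨Sum.inr 1, h1'⟩, ⟨Sum.inr 2, h2'⟩)}).Reachable
      ⟨Sum.inr 1, h1'⟩ ⟨Sum.inr 2, h2'⟩ := by
  intro hre
  by_cases hu : u ∈ D
  · have hsep : ((Sum.inr 1 : V ⊕ Fin 3) = Sum.inr 0 ∨ (Sum.inr 1 : V ⊕ Fin 3) = Sum.inr 1) ↔
        ((Sum.inr 2 : V ⊕ Fin 3) = Sum.inr 0 ∨ (Sum.inr 2 : V ⊕ Fin 3) = Sum.inr 1) := by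
      refine sep_transport (fun z => z.1 = Sum.inr 0 ∨ z.1 = Sum.inr 1) ?_ hre
      rintro ⟨(w | i), hp⟩ ⟨(z | j), hq⟩ hpq <;> rw [del_adj] at hpq <;>
        obtain ⟨hadj, hne⟩ := hpq
      · simp
      · rcases tadj_lr.mp hadj with ⟨rfl, rfl⟩ | ⟨rfl, rfl⟩
        · exact absurd hu (by simpa using hp)
        · simp
      · rcases tadj_rl.mp hadj with ⟨rfl, rfl⟩ | ⟨rfl, rfl⟩
        · exact absurd hu (by simpa using hq)
        · simp
      · rcases tadj_rr.mp hadj with hn | hn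
        · rcases fin3_succ hn with ⟨rfl, rfl⟩ | ⟨rfl, rfl⟩
          · simp
          · exact absurd rfl hne
        · rcases fin3_succ hn with ⟨rfl, rfl⟩ | ⟨rfl, rfl⟩
          · simp
          · exact absurd Sym2.eq_swap hne
    simp at hsep
  · by_cases hv : v ∈ D
    · have hsep : ((Sum.inr 1 : V ⊕ Fin 3) = Sum.inr 2) ↔
          ((Sum.inr 2 : V ⊕ Fin 3) = Sum.inr 2) := by
        refine sep_transport (fun z => z.1 = Sum.inr 2) ?_ hre
        rintro ⟨(w | i), hp⟩ ⟨(z | j), hq⟩ hpq <;> rw [del_adj] at hpq <;>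
          obtain ⟨hadj, hne⟩ := hpq
        · simp
        · rcases tadj_lr.mp hadj with ⟨rfl, rfl⟩ | ⟨rfl, rfl⟩
          · simp
          · exact absurd hv (by simpa using hp)
        · rcases tadj_rl.mp hadj with ⟨rfl, rfl⟩ | ⟨rfl, rfl⟩
          · simp
          · exact absurd hv (by simpa using hq)
        · rcases tadj_rr.mp hadj with hn | hn
          · rcases fin3_succ hn with ⟨rfl, rfl⟩ | ⟨rfl, rfl⟩
            · simp
            · exact absurd rfl hne
          · rcases fin3_succ hn with ⟨rfl, rfl⟩ | ⟨rfl, rfl⟩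
            · simp
            · exact absurd Sym2.eq_swap hne
      simp at hsep
    · let f : ↥{x : V ⊕ Fin 3 | x ∉ D.image Sum.inl} → ↥{w : V | w ∉ D} := fun z =>
        match z with
        | ⟨Sum.inl w, hw⟩ => ⟨w, by simpa using hw⟩
        | ⟨Sum.inr i, _⟩ => if (i : ℕ) ≤ 1 then ⟨u, hu⟩ else ⟨v, hv⟩
      have hedge : ∀ p q, ((((tripleSub G u v).induce {x : V ⊕ Fin 3 | x ∉ D.image Sum.inl}) \
            fromEdgeSet {s(⟨Sum.inr 1, h1'⟩, ⟨Sum.inr 2, h2'⟩)})).Adj p q →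
          ((G.induce {w : V | w ∉ D}) \
            fromEdgeSet {s((⟨u, hu⟩ : {w : V | w ∉ D}), ⟨v, hv⟩)}).Reachable (f p) (f q) := by
        rintro ⟨(w | i), hp⟩ ⟨(z | j), hq⟩ hpq <;> rw [del_adj] at hpq <;>
          obtain ⟨hadj, hne⟩ := hpq
        · have hwz := tadj_ll.mp hadj
          refine Adj.reachable ?_
          rw [del_adj]
          refine ⟨hwz.1, ?_⟩
          rw [Ne, sym2_sub_eq_iff]
          rcases hwz with ⟨-, h1, h2⟩
          tauto
        · rcases tadj_lr.mp hadj with ⟨rfl, rfl⟩ | ⟨rfl, rfl⟩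
          · exact Reachable.refl _
          · exact Reachable.refl _
        · rcases tadj_rl.mp hadj with ⟨rfl, rfl⟩ | ⟨rfl, rfl⟩
          · exact Reachable.refl _
          · exact Reachable.refl _
        · rcases tadj_rr.mp hadj with hn | hn
          · rcases fin3_succ hn with ⟨rfl, rfl⟩ | ⟨rfl, rfl⟩
            · exact Reachable.refl _
            · exact absurd rfl hne
          · rcases fin3_succ hn with ⟨rfl, rfl⟩ | ⟨rfl, rfl⟩
            · exact Reachable.refl _
            · exact absurd Sym2.eq_swap hne
      exact bridge_induce hD hu hv h (reach_transport f hedge hre)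

end blockC
section blockF
variable {V : Type} {G : SimpleGraph V} {u v : V}

lemma forward (h : G.Adj u v) {D : Finset V}
    (hD : (G.induce {w : V | w ∉ D}).IsAcyclic) :
    ((tripleSub G u v).induce {x : V ⊕ Fin 3 | x ∉ D.image Sum.inl}).IsAcyclic := by
  rw [isAcyclic_iff_forall_adj_isBridge]
  rintro ⟨x, hx⟩ ⟨y, hy⟩ hxy
  rw [isBridge_iff]
  rcases x with a | i <;> rcases y with b | j
  · have hab := tadj_ll.mp hxy
    exact noreachA h hD hx hy hab.1 hab.2.1 hab.2.2
  · rcases tadj_lr.mp hxy with ⟨rfl, rfl⟩ | ⟨rfl, rfl⟩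
    · exact noreachB h hD hx hy
    · intro hre
      rw [Sym2.eq_swap] at hre
      exact noreachB' h hD hy hx hre.symm
  · rcases tadj_rl.mp hxy with ⟨rfl, rfl⟩ | ⟨rfl, rfl⟩
    · intro hre
      rw [Sym2.eq_swap] at hre
      exact noreachB h hD hy hx hre.symm
    · exact noreachB' h hD hx hy
  · rcases tadj_rr.mp hxy with hn | hn
    · rcases fin3_succ hn with ⟨rfl, rfl⟩ | ⟨rfl, rfl⟩
      · exact noreachC h hD hx hy
      · exact noreachD h hD hx hy
    · rcases fin3_succ hn with ⟨rfl, rfl⟩ | ⟨rfl, rfl⟩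
      · intro hre
        rw [Sym2.eq_swap] at hre
        exact noreachC h hD hy hx hre.symm
      · intro hre
        rw [Sym2.eq_swap] at hre
        exact noreachD h hD hy hx hre.symm

end blockF
section blockBk
variable {V : Type} {G : SimpleGraph V} {u v : V}

lemma backward1 (h : G.Adj u v) {D' : Finset (V ⊕ Fin 3)}
    (hD' : ((tripleSub G u v).induce {x : V ⊕ Fin 3 | x ∉ D'}).IsAcyclic) :
    (G.induce {w : V | w ∉ insert u (D'.preimage Sum.inl Sum.inl_injective.injOn)}).IsAcyclic := by
  rw [isAcyclic_iff_forall_adj_isBridge]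
  rintro ⟨a, ha⟩ ⟨b, hb⟩ hab
  rw [isBridge_iff]
  refine fun hre => ?_
  have hEmem : ∀ {c : V},
      c ∈ {w : V | w ∉ insert u (D'.preimage Sum.inl Sum.inl_injective.injOn)} →
      c ≠ u ∧ (Sum.inl c : V ⊕ Fin 3) ∉ D' := by
    intro c hc
    refine ⟨fun hh => hc (Finset.mem_insert.mpr (Or.inl hh)),
      fun hh => hc (Finset.mem_insert_of_mem (Finset.mem_preimage.mpr hh))⟩
  obtain ⟨hau, haD'⟩ := hEmem ha
  obtain ⟨hbu, hbD'⟩ := hEmem hb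
  have hadjT : (tripleSub G u v).Adj (Sum.inl a) (Sum.inl b) :=
    tadj_ll.mpr ⟨hab, fun hh => hau hh.1, fun hh => hbu hh.2⟩
  let f : ↥{w : V | w ∉ insert u (D'.preimage Sum.inl Sum.inl_injective.injOn)} →
      ↥{x : V ⊕ Fin 3 | x ∉ D'} := fun z => ⟨Sum.inl z.1, (hEmem z.2).2⟩
  have hedge : ∀ p q,
      (((G.induce {w : V | w ∉ insert u (D'.preimage Sum.inl Sum.inl_injective.injOn)}) \
        fromEdgeSet {s(⟨a, ha⟩, ⟨b, hb⟩)})).Adj p q →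
      (((tripleSub G u v).induce {x : V ⊕ Fin 3 | x ∉ D'}) \
        fromEdgeSet {s((⟨Sum.inl a, haD'⟩ : {x : V ⊕ Fin 3 | x ∉ D'}),
          ⟨Sum.inl b, hbD'⟩)}).Reachable (f p) (f q) := by
    rintro ⟨p, hp⟩ ⟨q, hq⟩ hpq
    rw [del_adj] at hpq
    obtain ⟨hadj, hne⟩ := hpq
    refine Adj.reachable ?_
    rw [del_adj]
    refine ⟨tadj_ll.mpr ⟨hadj, fun hh => (hEmem hp).1 hh.1, fun hh => (hEmem hq).1 hh.2⟩, ?_⟩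
    rw [Ne, sym2_sub_eq_iff] at hne ⊢
    simp only [Sum.inl.injEq]
    exact hne
  exact bridge_induce hD' haD' hbD' hadjT (reach_transport f hedge hre)

lemma splice (h : G.Adj u v) {D' : Finset (V ⊕ Fin 3)}
    (hnr' : ∀ i : Fin 3, (Sum.inr i : V ⊕ Fin 3) ∈ {x : V ⊕ Fin 3 | x ∉ D'})
    (hu' : (Sum.inl u : V ⊕ Fin 3) ∈ {x : V ⊕ Fin 3 | x ∉ D'})
    (hv' : (Sum.inl v : V ⊕ Fin 3) ∈ {x : V ⊕ Fin 3 | x ∉ D'})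
    {c d : V} (hc : (Sum.inl c : V ⊕ Fin 3) ∈ {x : V ⊕ Fin 3 | x ∉ D'})
    (hd : (Sum.inl d : V ⊕ Fin 3) ∈ {x : V ⊕ Fin 3 | x ∉ D'}) :
    (((tripleSub G u v).induce {x : V ⊕ Fin 3 | x ∉ D'}) \
      fromEdgeSet {s(⟨Sum.inl c, hc⟩, ⟨Sum.inl d, hd⟩)}).Reachable
      ⟨Sum.inl u, hu'⟩ ⟨Sum.inl v, hv'⟩ := by
  have s1 : (((tripleSub G u v).induce {x : V ⊕ Fin 3 | x ∉ D'}) \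
      fromEdgeSet {s(⟨Sum.inl c, hc⟩, ⟨Sum.inl d, hd⟩)}).Adj
      ⟨Sum.inl u, hu'⟩ ⟨Sum.inr 0, hnr' 0⟩ := by
    rw [del_adj]
    exact ⟨tadj_lr.mpr (Or.inl ⟨rfl, rfl⟩), by rw [Ne, sym2_sub_eq_iff]; simp⟩
  have s2 : (((tripleSub G u v).induce {x : V ⊕ Fin 3 | x ∉ D'}) \
      fromEdgeSet {s(⟨Sum.inl c, hc⟩, ⟨Sum.inl d, hd⟩)}).Adj
      ⟨Sum.inr 0, hnr' 0⟩ ⟨Sum.inr 1, hnr' 1⟩ := by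
    rw [del_adj]
    exact ⟨tadj_rr.mpr (Or.inl (by decide)), by rw [Ne, sym2_sub_eq_iff]; simp⟩
  have s3 : (((tripleSub G u v).induce {x : V ⊕ Fin 3 | x ∉ D'}) \
      fromEdgeSet {s(⟨Sum.inl c, hc⟩, ⟨Sum.inl d, hd⟩)}).Adj
      ⟨Sum.inr 1, hnr' 1⟩ ⟨Sum.inr 2, hnr' 2⟩ := by
    rw [del_adj]
    exact ⟨tadj_rr.mpr (Or.inl (by decide)), by rw [Ne, sym2_sub_eq_iff]; simp⟩
  have s4 : (((tripleSub G u v).induce {x : V ⊕ Fin 3 | x ∉ D'}) \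
      fromEdgeSet {s(⟨Sum.inl c, hc⟩, ⟨Sum.inl d, hd⟩)}).Adj
      ⟨Sum.inr 2, hnr' 2⟩ ⟨Sum.inl v, hv'⟩ := by
    rw [del_adj]
    exact ⟨tadj_rl.mpr (Or.inr ⟨rfl, rfl⟩), by rw [Ne, sym2_sub_eq_iff]; simp⟩
  exact s1.reachable.trans (s2.reachable.trans (s3.reachable.trans s4.reachable))

lemma backward2 (h : G.Adj u v) {D' : Finset (V ⊕ Fin 3)}
    (hD' : ((tripleSub G u v).induce {x : V ⊕ Fin 3 | x ∉ D'}).IsAcyclic)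
    (hnr : ∀ i : Fin 3, (Sum.inr i : V ⊕ Fin 3) ∉ D') :
    (G.induce {w : V | w ∉ D'.preimage Sum.inl Sum.inl_injective.injOn}).IsAcyclic := by
  rw [isAcyclic_iff_forall_adj_isBridge]
  rintro ⟨a, ha⟩ ⟨b, hb⟩ hab
  rw [isBridge_iff]
  refine fun hre => ?_
  have hmem : ∀ {c : V}, c ∈ {w : V | w ∉ D'.preimage Sum.inl Sum.inl_injective.injOn} →
      (Sum.inl c : V ⊕ Fin 3) ∉ D' := fun hc hh => hc (Finset.mem_preimage.mpr hh)
  have haD' := hmem ha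
  have hbD' := hmem hb
  have hnr' : ∀ i : Fin 3, (Sum.inr i : V ⊕ Fin 3) ∈ {x : V ⊕ Fin 3 | x ∉ D'} := hnr
  by_cases hsab : (a = u ∧ b = v) ∨ (a = v ∧ b = u)
  · have huv : (Sum.inl u : V ⊕ Fin 3) ∈ {x : V ⊕ Fin 3 | x ∉ D'} ∧
        (Sum.inl v : V ⊕ Fin 3) ∈ {x : V ⊕ Fin 3 | x ∉ D'} := by
      rcases hsab with ⟨h1, h2⟩ | ⟨h1, h2⟩
      · exact ⟨h1 ▸ haD', h2 ▸ hbD'⟩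
      · exact ⟨h2 ▸ hbD', h1 ▸ haD'⟩
    have hreT : (((tripleSub G u v).induce {x : V ⊕ Fin 3 | x ∉ D'}) \
        fromEdgeSet {s((⟨Sum.inr 1, hnr' 1⟩ : {x : V ⊕ Fin 3 | x ∉ D'}),
          ⟨Sum.inr 2, hnr' 2⟩)}).Reachable ⟨Sum.inl a, haD'⟩ ⟨Sum.inl b, hbD'⟩ := by
      refine reach_transport
        (fun z => (⟨Sum.inl z.1, hmem z.2⟩ : {x : V ⊕ Fin 3 | x ∉ D'})) ?_ hre
      rintro ⟨p, hp⟩ ⟨q, hq⟩ hpq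
      rw [deleteEdges, del_adj] at hpq
      obtain ⟨hadj, hne⟩ := hpq
      rw [Ne, sym2_sub_eq_iff] at hne
      refine Adj.reachable ?_
      rw [del_adj]
      constructor
      · refine tadj_ll.mpr ⟨hadj, ?_, ?_⟩ <;> rcases hsab with ⟨rfl, rfl⟩ | ⟨rfl, rfl⟩ <;> tauto
      · rw [Ne, sym2_sub_eq_iff]; simp
    have r10 : (((tripleSub G u v).induce {x : V ⊕ Fin 3 | x ∉ D'}) \
        fromEdgeSet {s((⟨Sum.inr 1, hnr' 1⟩ : {x : V ⊕ Fin 3 | x ∉ D'}),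
          ⟨Sum.inr 2, hnr' 2⟩)}).Adj ⟨Sum.inr 1, hnr' 1⟩ ⟨Sum.inr 0, hnr' 0⟩ := by
      rw [del_adj]
      refine ⟨tadj_rr.mpr (Or.inr (by decide)), ?_⟩
      rw [Ne, sym2_sub_eq_iff]
      simp [Fin.ext_iff]
    have r0u : (((tripleSub G u v).induce {x : V ⊕ Fin 3 | x ∉ D'}) \
        fromEdgeSet {s((⟨Sum.inr 1, hnr' 1⟩ : {x : V ⊕ Fin 3 | x ∉ D'}),
          ⟨Sum.inr 2, hnr' 2⟩)}).Adj ⟨Sum.inr 0, hnr' 0⟩ ⟨Sum.inl u, huv.1⟩ := by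
      rw [del_adj]
      refine ⟨tadj_rl.mpr (Or.inl ⟨rfl, rfl⟩), ?_⟩
      rw [Ne, sym2_sub_eq_iff]
      simp
    have rv2 : (((tripleSub G u v).induce {x : V ⊕ Fin 3 | x ∉ D'}) \
        fromEdgeSet {s((⟨Sum.inr 1, hnr' 1⟩ : {x : V ⊕ Fin 3 | x ∉ D'}),
          ⟨Sum.inr 2, hnr' 2⟩)}).Adj ⟨Sum.inl v, huv.2⟩ ⟨Sum.inr 2, hnr' 2⟩ := by
      rw [del_adj]
      refine ⟨tadj_lr.mpr (Or.inr ⟨rfl, rfl⟩), ?_⟩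
      rw [Ne, sym2_sub_eq_iff]
      simp
    have hbr := bridge_induce hD' (hnr' 1) (hnr' 2) (tadj_rr.mpr (Or.inl (by decide)))
    rcases hsab with ⟨rfl, rfl⟩ | ⟨rfl, rfl⟩
    · exact hbr (r10.reachable.trans (r0u.reachable.trans (hreT.trans rv2.reachable)))
    · exact hbr (r10.reachable.trans (r0u.reachable.trans (hreT.symm.trans rv2.reachable)))
  · have hadjT : (tripleSub G u v).Adj (Sum.inl a) (Sum.inl b) :=
      tadj_ll.mpr ⟨hab, fun hh => hsab (Or.inl hh), fun hh => hsab (Or.inr hh)⟩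
    have hedge : ∀ p q,
        (((G.induce {w : V | w ∉ D'.preimage Sum.inl Sum.inl_injective.injOn}) \
          fromEdgeSet {s(⟨a, ha⟩, ⟨b, hb⟩)})).Adj p q →
        (((tripleSub G u v).induce {x : V ⊕ Fin 3 | x ∉ D'}) \
          fromEdgeSet {s((⟨Sum.inl a, haD'⟩ : {x : V ⊕ Fin 3 | x ∉ D'}),
            ⟨Sum.inl b, hbD'⟩)}).Reachable ⟨Sum.inl p.1, hmem p.2⟩ ⟨Sum.inl q.1, hmem q.2⟩ := by
      rintro ⟨p, hp⟩ ⟨q, hq⟩ hpq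
      rw [del_adj] at hpq
      obtain ⟨hadj, hne⟩ := hpq
      rw [Ne, sym2_sub_eq_iff] at hne
      by_cases hpquv : (p = u ∧ q = v) ∨ (p = v ∧ q = u)
      · rcases hpquv with ⟨rfl, rfl⟩ | ⟨rfl, rfl⟩
        · exact splice h hnr' (hmem hp) (hmem hq) haD' hbD'
        · exact (splice h hnr' (hmem hq) (hmem hp) haD' hbD').symm
      · refine Adj.reachable ?_
        rw [del_adj]
        refine ⟨tadj_ll.mpr ⟨hadj, fun hh => hpquv (Or.inl hh),
          fun hh => hpquv (Or.inr hh)⟩, ?_⟩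
        rw [Ne, sym2_sub_eq_iff]
        simp only [Sum.inl.injEq]
        exact hne
    exact bridge_induce hD' haD' hbD' hadjT (reach_transport
      (fun z => (⟨Sum.inl z.1, hmem z.2⟩ : {x : V ⊕ Fin 3 | x ∉ D'})) hedge hre)

end blockBk

end TSubAux

/-- Triple subdivision of an edge preserves the decycling
number: `∇(L(G; e)) = ∇(G)`. -/
theorem decyclingNumber_tripleSub {V : Type} [Fintype V] (G : SimpleGraph V)
    (u v : V) (h : G.Adj u v) :
    decyclingNumber (tripleSub G u v) = decyclingNumber G := by
  classical
  apply le_antisymm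
  · have hGne : {n : ℕ | ∃ D : Finset V, D.card = n ∧
        (G.induce {v : V | v ∉ D}).IsAcyclic}.Nonempty :=
      ⟨Finset.univ.card, Finset.univ, rfl,
        fun x _ _ => absurd (Finset.mem_univ x.1) x.2⟩
    obtain ⟨D, hcard, hac⟩ := Nat.sInf_mem hGne
    exact Nat.sInf_le ⟨D.image Sum.inl,
      by rw [Finset.card_image_of_injective _ Sum.inl_injective]; exact hcard,
      TSubAux.forward h hac⟩
  · have hTne : {n : ℕ | ∃ D : Finset (V ⊕ Fin 3), D.card = n ∧
        ((tripleSub G u v).induce {x : V ⊕ Fin 3 | x ∉ D}).IsAcyclic}.Nonempty :=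
      ⟨Finset.univ.card, Finset.univ, rfl,
        fun x _ _ => absurd (Finset.mem_univ x.1) x.2⟩
    obtain ⟨D', hcard, hac⟩ := Nat.sInf_mem hTne
    by_cases hex : ∃ i : Fin 3, (Sum.inr i : V ⊕ Fin 3) ∈ D'
    · obtain ⟨i, hi⟩ := hex
      have hacG := TSubAux.backward1 h hac
      have h1 : decyclingNumber G ≤
          (insert u (D'.preimage Sum.inl Sum.inl_injective.injOn)).card :=
        by
        have hmem : (insert u (D'.preimage Sum.inl Sum.inl_injective.injOn)).card ∈
            {n : ℕ | ∃ D : Finset V, D.card = n ∧ (G.induce {v : V | v ∉ D}).IsAcyclic} :=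
          ⟨insert u (D'.preimage Sum.inl Sum.inl_injective.injOn), rfl, hacG⟩
        exact Nat.sInf_le hmem
      have h2 : (D'.preimage Sum.inl Sum.inl_injective.injOn).card ≤ D'.card - 1 := by
        have himg : (D'.preimage Sum.inl Sum.inl_injective.injOn).card
            = ((D'.preimage Sum.inl Sum.inl_injective.injOn).image Sum.inl).card :=
          (Finset.card_image_of_injective _ (Sum.inl_injective : Function.Injective (Sum.inl : V → V ⊕ Fin 3))).symm
        have hsub : (D'.preimage Sum.inl Sum.inl_injective.injOn).image Sum.inl ⊆
            D'.erase (Sum.inr i) := by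
          intro x hx
          obtain ⟨y, hy, rfl⟩ := Finset.mem_image.mp hx
          exact Finset.mem_erase.mpr ⟨by simp, Finset.mem_preimage.mp hy⟩
        calc (D'.preimage Sum.inl Sum.inl_injective.injOn).card
            = ((D'.preimage Sum.inl Sum.inl_injective.injOn).image Sum.inl).card := himg
          _ ≤ (D'.erase (Sum.inr i)).card := Finset.card_le_card hsub
          _ = D'.card - 1 := Finset.card_erase_of_mem hi
      have h3 : 1 ≤ D'.card := Finset.card_pos.mpr ⟨_, hi⟩
      calc decyclingNumber G
          ≤ (insert u (D'.preimage Sum.inl Sum.inl_injective.injOn)).card := h1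
        _ ≤ (D'.preimage Sum.inl Sum.inl_injective.injOn).card + 1 :=
            Finset.card_insert_le _ _
        _ ≤ D'.card := by omega
        _ = decyclingNumber (tripleSub G u v) := hcard
    · push_neg at hex
      have hacG := TSubAux.backward2 h hac hex
      have hcardeq : (D'.preimage Sum.inl Sum.inl_injective.injOn).card = D'.card := by
        have himg : ((D'.preimage Sum.inl Sum.inl_injective.injOn).image Sum.inl) = D' := by
          ext x
          constructor
          · intro hx
            obtain ⟨y, hy, rfl⟩ := Finset.mem_image.mp hx
            exact Finset.mem_preimage.mp hy
          · intro hx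
            rcases x with a | i
            · exact Finset.mem_image.mpr ⟨a, Finset.mem_preimage.mpr hx, rfl⟩
            · exact absurd hx (hex i)
        calc (D'.preimage Sum.inl Sum.inl_injective.injOn).card
            = ((D'.preimage Sum.inl Sum.inl_injective.injOn).image Sum.inl).card :=
              (Finset.card_image_of_injective _ (Sum.inl_injective : Function.Injective (Sum.inl : V → V ⊕ Fin 3))).symm
          _ = D'.card := by rw [himg]
      calc decyclingNumber G
          ≤ (D'.preimage Sum.inl Sum.inl_injective.injOn).card :=
            by
            have hmem : (D'.preimage Sum.inl Sum.inl_injective.injOn).card ∈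
                {n : ℕ | ∃ D : Finset V, D.card = n ∧ (G.induce {v : V | v ∉ D}).IsAcyclic} :=
              ⟨D'.preimage Sum.inl Sum.inl_injective.injOn, rfl, hacG⟩
            exact Nat.sInf_le hmem
        _ = D'.card := hcardeq
        _ = decyclingNumber (tripleSub G u v) := hcard
end

section
/- Let G be a graph and S a decycling set of G (i.e., G − S is a forest). Then the partial whisker graph W_S(G), obtained from G by attaching a new pendant vertex to each vertex of S, is vertex decomposable. -/
open scoped Classical

attribute [-instance] instDecidableEqSum

section AuxWhisker

open Sum

variable {V : Type}

/-- The set of "unwhiskered active" base vertices of `A`. -/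
def Bset (S : Finset V) (A : Finset (V ⊕ {s : V // s ∈ S})) : Set V :=
  {v | Sum.inl v ∈ A ∧ ∀ h : v ∈ S, Sum.inr ⟨v, h⟩ ∉ A}

lemma whisker_adj_inl_inl {G : SimpleGraph V} {S : Finset V} {u v : V} :
    (whiskerS G S).Adj (Sum.inl u) (Sum.inl v) ↔ G.Adj u v := by
  constructor
  · intro h
    rcases (SimpleGraph.fromRel_adj _ _ _).1 h with ⟨_, h | h⟩
    · exact h
    · exact h.symm
  · intro h
    exact (SimpleGraph.fromRel_adj _ _ _).2 ⟨by simp [h.ne], Or.inl h⟩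

lemma whisker_adj_inl_inr {G : SimpleGraph V} {S : Finset V} {u : V}
    {s : {s : V // s ∈ S}} :
    (whiskerS G S).Adj (Sum.inl u) (Sum.inr s) ↔ u = s.1 := by
  constructor
  · intro h
    rcases (SimpleGraph.fromRel_adj _ _ _).1 h with ⟨_, h | h⟩
    · exact h
    · exact h.elim
  · intro h
    exact (SimpleGraph.fromRel_adj _ _ _).2 ⟨by simp, Or.inl h⟩

lemma whisker_not_adj_inr_inr {G : SimpleGraph V} {S : Finset V}
    {s t : {s : V // s ∈ S}} :
    ¬ (whiskerS G S).Adj (Sum.inr s) (Sum.inr t) := by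
  intro h
  rcases (SimpleGraph.fromRel_adj _ _ _).1 h with ⟨_, h | h⟩ <;> exact h

/-- In an acyclic finite graph, the endpoint of a maximum-length path is a leaf. -/
lemma aux_exists_leaf {W : Type} [Fintype W] {H : SimpleGraph W} (hac : H.IsAcyclic)
    {a b : W} (hab : H.Adj a b) :
    ∃ u v : W, H.Adj u v ∧ ∀ w, H.Adj u w → w = v := by
  classical
  set L : Set ℕ := {n | ∃ (x y : W) (p : H.Walk x y), p.IsPath ∧ p.length = n} with hL
  have hne : 1 ∈ L := by
    refine ⟨a, b, SimpleGraph.Walk.cons hab SimpleGraph.Walk.nil, ?_, rfl⟩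
    simp [hab.ne]
  have hbdd : BddAbove L := by
    refine ⟨Fintype.card W, ?_⟩
    rintro n ⟨x, y, p, hp, rfl⟩
    exact hp.length_lt.le
  obtain ⟨x, y, p, hp, hlen⟩ : sSup L ∈ L := Nat.sSup_mem ⟨1, hne⟩ hbdd
  have h1 : 1 ≤ p.length := hlen ▸ le_csSup hbdd hne
  refine ⟨x, p.getVert 1, ?_, ?_⟩
  · have := p.adj_getVert_succ (i := 0) (by omega)
    simpa using this
  · intro w hxw
    by_cases hw : w ∈ p.support
    · have hq : (SimpleGraph.Walk.cons hxw SimpleGraph.Walk.nil : H.Walk x w).IsPath := by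
        simp [hxw.ne]
      have huniq := SimpleGraph.isAcyclic_iff_path_unique.mp hac
        ⟨p.takeUntil w hw, hp.takeUntil hw⟩ ⟨SimpleGraph.Walk.cons hxw SimpleGraph.Walk.nil, hq⟩
      have hEq : p.takeUntil w hw = SimpleGraph.Walk.cons hxw SimpleGraph.Walk.nil :=
        congrArg Subtype.val huniq
      have hps : p = SimpleGraph.Walk.cons hxw (p.dropUntil w hw) := by
        conv_lhs => rw [← p.take_spec hw]
        rw [hEq]
        rfl
      have : p.getVert 1 = w := by
        rw [hps]
        simp [SimpleGraph.Walk.getVert_cons_succ]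
      exact this.symm
    · exfalso
      have hmem : p.length + 1 ∈ L := by
        refine ⟨w, y, SimpleGraph.Walk.cons hxw.symm p, ?_, rfl⟩
        exact (SimpleGraph.Walk.cons_isPath_iff _ _).2 ⟨hp, hw⟩
      have := le_csSup hbdd hmem
      omega

lemma aux_acyclic_mono {G : SimpleGraph V} {B C : Set V} (h : B ⊆ C)
    (hC : (G.induce C).IsAcyclic) : (G.induce B).IsAcyclic := by
  intro v c hc
  let f : G.induce B →g G.induce C := ⟨fun x => ⟨x.1, h x.2⟩, fun {a b} hab => hab⟩
  have hinj : Function.Injective f := by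
    intro a b hab
    have h2 : (f a).val = (f b).val := congrArg Subtype.val hab
    exact Subtype.ext h2
  exact hC (c.map f) (hc.map hinj)

lemma aux_Bset_erase {S : Finset V} {A : Finset (V ⊕ {s : V // s ∈ S})} {s : V} :
    Bset S (A.erase (Sum.inl s)) ⊆ Bset S A := by
  rintro z ⟨hz1, hz2⟩
  refine ⟨Finset.mem_of_mem_erase hz1, fun h hmem => ?_⟩
  exact hz2 h (Finset.mem_erase.mpr ⟨by simp, hmem⟩)

lemma aux_Bset_sdiff {G : SimpleGraph V} {S : Finset V}
    {A : Finset (V ⊕ {s : V // s ∈ S})} {s : V} :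
    Bset S (A \ closedNbrOn (whiskerS G S) A (Sum.inl s)) ⊆ Bset S A := by
  rintro z ⟨hz1, hz2⟩
  have hz1A : Sum.inl z ∈ A := (Finset.mem_sdiff.mp hz1).1
  refine ⟨hz1A, fun h hmem => ?_⟩
  have hC : Sum.inr (⟨z, h⟩ : {s : V // s ∈ S}) ∈ closedNbrOn (whiskerS G S) A (Sum.inl s) := by
    by_contra hC
    exact hz2 h (Finset.mem_sdiff.mpr ⟨hmem, hC⟩)
  have := (Finset.mem_filter.mp hC).2
  rcases this with h' | h'
  · exact absurd h' (by simp)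
  · have hsz : s = z := whisker_adj_inl_inr.mp h'
    subst hsz
    exact (Finset.mem_sdiff.mp hz1).2 (Finset.mem_filter.mpr ⟨hz1A, Or.inl rfl⟩)

lemma aux_key [Fintype V] (G : SimpleGraph V) (S : Finset V) :
    ∀ (n : ℕ) (A : Finset (V ⊕ {s : V // s ∈ S})), A.card ≤ n →
      (G.induce (Bset S A)).IsAcyclic → VDOn (whiskerS G S) A := by
  intro n
  induction n with
  | zero =>
    intro A hA _
    rw [VDOn]
    left
    have : A = ∅ := Finset.card_eq_zero.mp (Nat.le_zero.mp hA)
    simp [this]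
  | succ n IH =>
    intro A hA hac
    rw [VDOn]
    by_cases hwh : ∃ (s : V) (hs : s ∈ S), Sum.inl s ∈ A ∧ Sum.inr ⟨s, hs⟩ ∈ A
    · obtain ⟨s, hs, hsl, hsr⟩ := hwh
      right
      have hxC : Sum.inl s ∈ closedNbrOn (whiskerS G S) A (Sum.inl s) :=
        Finset.mem_filter.mpr ⟨hsl, Or.inl rfl⟩
      refine ⟨⟨Sum.inl s, hsl⟩, ?_, ?_, ?_⟩
      · intro T hT hTind
        refine ⟨Sum.inr ⟨s, hs⟩, hsr, whisker_adj_inl_inr.mpr rfl, ?_⟩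
        have hxT : Sum.inl s ∉ T := fun hmem =>
          (Finset.mem_sdiff.mp (hT hmem)).2 hxC
        have hnew : ∀ t ∈ T, ¬ (whiskerS G S).Adj (Sum.inr ⟨s, hs⟩) t := by
          intro t ht hadj
          rcases t with z | z
          · have : z = s := (whisker_adj_inl_inr.mp hadj.symm)
            exact hxT (this ▸ ht)
          · exact whisker_not_adj_inr_inr hadj
        intro a ha b hb
        rcases Finset.mem_insert.mp ha with rfl | ha <;>
          rcases Finset.mem_insert.mp hb with rfl | hb
        · exact (whiskerS G S).loopless.irrefl _
        · exact hnew b hb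
        · exact fun h => hnew a ha h.symm
        · exact hTind a ha b hb
      · refine IH _ ?_ (aux_acyclic_mono aux_Bset_erase hac)
        show (A.erase (Sum.inl s)).card ≤ n
        have := Finset.card_erase_lt_of_mem hsl
        omega
      · refine IH _ ?_ (aux_acyclic_mono aux_Bset_sdiff hac)
        show (A \ closedNbrOn (whiskerS G S) A (Sum.inl s)).card ≤ n
        have hss : A \ closedNbrOn (whiskerS G S) A (Sum.inl s) ⊂ A :=
          (Finset.ssubset_iff_of_subset Finset.sdiff_subset).2
            ⟨Sum.inl s, hsl, by simp [hxC]⟩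
        have := Finset.card_lt_card hss
        omega
    · push_neg at hwh
      have hBmem : ∀ z : V, Sum.inl z ∈ A → z ∈ Bset S A := by
        intro z hz
        exact ⟨hz, fun h => hwh z h hz⟩
      by_cases hE : ∀ u ∈ A, ∀ v ∈ A, ¬ (whiskerS G S).Adj u v
      · left; exact hE
      · right
        push_neg at hE
        obtain ⟨u, hu, v, hv, huv⟩ := hE
        -- the edge must be between two `inl` vertices in `Bset`
        obtain ⟨u', v', hu'A, hv'A, hG⟩ :
            ∃ u' v' : V, Sum.inl u' ∈ A ∧ Sum.inl v' ∈ A ∧ G.Adj u' v' := by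
          rcases u with z | z <;> rcases v with w | w
          · exact ⟨z, w, hu, hv, whisker_adj_inl_inl.mp huv⟩
          · exact absurd hv (hwh w.1 w.2 (by
              have : z = w.1 := whisker_adj_inl_inr.mp huv
              simpa [this] using hu))
          · exact absurd hu (hwh z.1 z.2 (by
              have : w = z.1 := whisker_adj_inl_inr.mp huv.symm
              simpa [this] using hv))
          · exact absurd huv whisker_not_adj_inr_inr
        have hadjB : (G.induce (Bset S A)).Adj ⟨u', hBmem u' hu'A⟩ ⟨v', hBmem v' hv'A⟩ := hG
        obtain ⟨p, q, hpq, hleaf⟩ := aux_exists_leaf hac hadjB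
        have hGpq : G.Adj p.1 q.1 := hpq
        have hxA : Sum.inl q.1 ∈ A := q.2.1
        have hxC : Sum.inl q.1 ∈ closedNbrOn (whiskerS G S) A (Sum.inl q.1) :=
          Finset.mem_filter.mpr ⟨hxA, Or.inl rfl⟩
        refine ⟨⟨Sum.inl q.1, hxA⟩, ?_, ?_, ?_⟩
        · intro T hT hTind
          refine ⟨Sum.inl p.1, p.2.1, whisker_adj_inl_inl.mpr hGpq.symm, ?_⟩
          have hnew : ∀ t ∈ T, ¬ (whiskerS G S).Adj (Sum.inl p.1) t := by
            intro t ht hadj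
            have htA : t ∈ A := (Finset.mem_sdiff.mp (hT ht)).1
            rcases t with z | z
            · have hGz : G.Adj p.1 z := whisker_adj_inl_inl.mp hadj
              have hzB : z ∈ Bset S A := hBmem z htA
              have hzq : (⟨z, hzB⟩ : ↑(Bset S A)) = q := hleaf ⟨z, hzB⟩ hGz
              have hzq' : z = q.1 := congrArg Subtype.val hzq
              rw [hzq'] at ht
              exact (Finset.mem_sdiff.mp (hT ht)).2 hxC
            · have hzp : p.1 = z.1 := whisker_adj_inl_inr.mp hadj
              have : Sum.inr (⟨p.1, hzp ▸ z.2⟩ : {s : V // s ∈ S}) ∈ A := by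
                have : z = ⟨p.1, hzp ▸ z.2⟩ := Subtype.ext hzp.symm
                rw [← this]
                exact htA
              exact p.2.2 (hzp ▸ z.2) this
          intro a ha b hb
          rcases Finset.mem_insert.mp ha with rfl | ha <;>
            rcases Finset.mem_insert.mp hb with rfl | hb
          · exact (whiskerS G S).loopless.irrefl _
          · exact hnew b hb
          · exact fun h => hnew a ha h.symm
          · exact hTind a ha b hb
        · refine IH _ ?_ (aux_acyclic_mono aux_Bset_erase hac)
          show (A.erase (Sum.inl q.1)).card ≤ n
          have := Finset.card_erase_lt_of_mem hxA
          omega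
        · refine IH _ ?_ (aux_acyclic_mono aux_Bset_sdiff hac)
          show (A \ closedNbrOn (whiskerS G S) A (Sum.inl q.1)).card ≤ n
          have hss : A \ closedNbrOn (whiskerS G S) A (Sum.inl q.1) ⊂ A :=
            (Finset.ssubset_iff_of_subset Finset.sdiff_subset).2
              ⟨Sum.inl q.1, hxA, by simp [hxC]⟩
          have := Finset.card_lt_card hss
          omega

end AuxWhisker

/-- If `S` is a decycling set of `G` (i.e. `G - S` is a
forest), then the whisker graph `W_S(G)` is vertex decomposable. -/
theorem whiskerS_vertexDecomposable {V : Type} [Fintype V] (G : SimpleGraph V)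
    (S : Finset V) (hS : (G.induce {v : V | v ∉ S}).IsAcyclic) :
    VDOn (whiskerS G S) Finset.univ := by
  refine aux_key G S (Finset.univ.card) Finset.univ le_rfl ?_
  have hB : Bset S (Finset.univ : Finset (V ⊕ {s : V // s ∈ S})) = {v : V | v ∉ S} := by
    ext v
    simp [Bset]
  rw [hB]
  exact hS
end

section
/- For any graph G with vertex x and any two partitions {Y,Z} and {Y′,Z′} of N_G(x), the independence complexes I(L_x(G; Y, Z)) and I(L_x(G; Y′, Z′)) are homotopy equivalent. -/
open scoped Classical

noncomputable section AuxLozin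

section StepLemma

variable {W : Type}

lemma indepFaces_mono {K : SimpleGraph W} {F F' : Finset W}
    (h : indepFaces K F) (hsub : F' ⊆ F) : indepFaces K F' :=
  fun u hu v hv => h u (hsub hu) v (hsub hv)

def stepCoef (p q c : W) : W → ℝ := fun w =>
  (if w = c then 2 else 0) - (if w = p then 1 else 0) - (if w = q then 1 else 0)

def stepT (p q c : W) (t : ℝ) (f : W → ℝ) : W → ℝ :=
  fun w => f w + (t * min (f p) (f q)) * stepCoef p q c w

variable {p q c : W}

lemma stepCoef_c (hcp : c ≠ p) (hcq : c ≠ q) : stepCoef p q c c = 2 := by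
  simp [stepCoef, hcp, hcq]

lemma stepCoef_p (hpq : p ≠ q) (hcp : c ≠ p) : stepCoef p q c p = -1 := by
  simp [stepCoef, hpq, Ne.symm hcp]

lemma stepCoef_q (hpq : p ≠ q) (hcq : c ≠ q) : stepCoef p q c q = -1 := by
  simp [stepCoef, Ne.symm hpq, Ne.symm hcq]

lemma stepCoef_other {w : W} (h1 : w ≠ p) (h2 : w ≠ q) (h3 : w ≠ c) :
    stepCoef p q c w = 0 := by
  simp [stepCoef, h1, h2, h3]

lemma sum_stepCoef [Fintype W] (p q c : W) : ∑ w, stepCoef p q c w = 0 := by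
  simp [stepCoef, Finset.sum_sub_distrib, Finset.sum_ite_eq']
  norm_num

lemma indep_insert (K : SimpleGraph W)
    (hcadj : ∀ w, K.Adj c w → K.Adj p w ∨ K.Adj q w)
    (F : Finset W) (hF : indepFaces K F) (hp : p ∈ F) (hq : q ∈ F) :
    indepFaces K (insert c F) := by
  intro u hu v hv hA
  have key : ∀ z ∈ F, ¬ K.Adj c z := by
    intro z hz hcz
    rcases hcadj z hcz with h | h
    · exact hF p hp z hz h
    · exact hF q hq z hz h
  rcases Finset.mem_insert.1 hu with hu' | hu' <;> rcases Finset.mem_insert.1 hv with hv' | hv'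
  · subst hu'; subst hv'; exact K.irrefl hA
  · subst hu'; exact key v hv' hA
  · subst hv'; exact key u hu' hA.symm
  · exact hF u hu' v hv' hA

lemma indep'_iff (K K' : SimpleGraph W)
    (hadj : ∀ u w, K'.Adj u w ↔ K.Adj u w ∨ (u = p ∧ w = q) ∨ (u = q ∧ w = p))
    (F : Finset W) :
    indepFaces K' F ↔ indepFaces K F ∧ ¬(p ∈ F ∧ q ∈ F) := by
  constructor
  · intro h
    refine ⟨fun u hu v hv hA => h u hu v hv ((hadj u v).2 (Or.inl hA)), ?_⟩
    rintro ⟨hp, hq⟩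
    exact h p hp q hq ((hadj p q).2 (Or.inr (Or.inl ⟨rfl, rfl⟩)))
  · rintro ⟨hK, hnpq⟩ u hu v hv hA
    rcases (hadj u v).1 hA with h | ⟨rfl, rfl⟩ | ⟨rfl, rfl⟩
    · exact hK u hu v hv h
    · exact hnpq ⟨hu, hv⟩
    · exact hnpq ⟨hv, hu⟩

variable [Fintype W]

lemma stepT_mem_aux (K : SimpleGraph W)
    (hpq : p ≠ q) (hcp : c ≠ p) (hcq : c ≠ q)
    (hcadj : ∀ w, K.Adj c w → K.Adj p w ∨ K.Adj q w)
    (t : ℝ) (ht0 : 0 ≤ t) (ht1 : t ≤ 1) (f : W → ℝ)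
    (hface : ∃ F, indepFaces K F ∧ ∀ v, f v ≠ 0 → v ∈ F)
    (hpos : ∀ v, 0 ≤ f v) (hsum : ∑ v, f v = 1) :
    (∃ F, indepFaces K F ∧ ∀ v, stepT p q c t f v ≠ 0 → v ∈ F) ∧
      (∀ v, 0 ≤ stepT p q c t f v) ∧ ∑ v, stepT p q c t f v = 1 := by
  have hmin0 : 0 ≤ min (f p) (f q) := le_min (hpos p) (hpos q)
  have hm0 : 0 ≤ t * min (f p) (f q) := mul_nonneg ht0 hmin0
  have hm1 : t * min (f p) (f q) ≤ min (f p) (f q) :=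
    mul_le_of_le_one_left hmin0 ht1
  obtain ⟨F₀, hF₀, hsupp⟩ := hface
  refine ⟨?_, ?_, ?_⟩
  · by_cases h0 : f p = 0 ∨ f q = 0
    · have hmin : min (f p) (f q) = 0 := by
        rcases h0 with h | h
        · rw [min_eq_left (h ▸ hpos q)]; exact h
        · rw [min_eq_right (h ▸ hpos p)]; exact h
      have : stepT p q c t f = f := funext fun w => by simp [stepT, hmin]
      rw [this]; exact ⟨F₀, hF₀, hsupp⟩
    · push_neg at h0
      have hp : p ∈ F₀ := hsupp p h0.1
      have hq : q ∈ F₀ := hsupp q h0.2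
      refine ⟨insert c F₀, indep_insert K hcadj F₀ hF₀ hp hq, fun w hw => ?_⟩
      by_contra hnw
      have hwc : w ≠ c := fun h => hnw (h ▸ Finset.mem_insert_self c F₀)
      have hwF : w ∉ F₀ := fun h => hnw (Finset.mem_insert_of_mem h)
      have hwp : w ≠ p := fun h => hwF (h ▸ hp)
      have hwq : w ≠ q := fun h => hwF (h ▸ hq)
      have hfw : f w = 0 := by_contra fun h => hwF (hsupp w h)
      apply hw
      simp [stepT, hfw, stepCoef_other hwp hwq hwc]
  · intro w
    by_cases hwc : w = c
    · rw [hwc]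
      simp only [stepT, stepCoef_c hcp hcq]
      nlinarith [hpos c]
    · by_cases hwp : w = p
      · rw [hwp]
        simp only [stepT, stepCoef_p hpq hcp]
        have := min_le_left (f p) (f q)
        nlinarith [hpos p]
      · by_cases hwq : w = q
        · rw [hwq]
          simp only [stepT, stepCoef_q hpq hcq]
          have := min_le_right (f p) (f q)
          nlinarith [hpos q]
        · simp only [stepT, stepCoef_other hwp hwq hwc]
          simpa using hpos w
  · simp only [stepT]
    rw [Finset.sum_add_distrib, ← Finset.mul_sum, sum_stepCoef, hsum]
    ring

lemma stepT_one_mem (K K' : SimpleGraph W)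
    (hpq : p ≠ q) (hcp : c ≠ p) (hcq : c ≠ q)
    (hadj : ∀ u w, K'.Adj u w ↔ K.Adj u w ∨ (u = p ∧ w = q) ∨ (u = q ∧ w = p))
    (hcadj : ∀ w, K.Adj c w → K.Adj p w ∨ K.Adj q w)
    (f : W → ℝ)
    (hface : ∃ F, indepFaces K F ∧ ∀ v, f v ≠ 0 → v ∈ F)
    (hpos : ∀ v, 0 ≤ f v) :
    ∃ F, indepFaces K' F ∧ ∀ v, stepT p q c 1 f v ≠ 0 → v ∈ F := by
  obtain ⟨F₀, hF₀, hsupp⟩ := hface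
  by_cases h0 : f p = 0 ∨ f q = 0
  · have hmin : min (f p) (f q) = 0 := by
      rcases h0 with h | h
      · rw [min_eq_left (h ▸ hpos q)]; exact h
      · rw [min_eq_right (h ▸ hpos p)]; exact h
    have hTf : stepT p q c 1 f = f := funext fun w => by simp [stepT, hmin]
    rw [hTf]
    rcases h0 with h | h
    · refine ⟨F₀.erase p, (indep'_iff K K' hadj _).2
        ⟨indepFaces_mono hF₀ (Finset.erase_subset _ _), by simp⟩, fun v hv => ?_⟩
      exact Finset.mem_erase.2 ⟨fun he => hv (he ▸ h), hsupp v hv⟩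
    · refine ⟨F₀.erase q, (indep'_iff K K' hadj _).2
        ⟨indepFaces_mono hF₀ (Finset.erase_subset _ _), by simp⟩, fun v hv => ?_⟩
      exact Finset.mem_erase.2 ⟨fun he => hv (he ▸ h), hsupp v hv⟩
  · push_neg at h0
    have hp : p ∈ F₀ := hsupp p h0.1
    have hq : q ∈ F₀ := hsupp q h0.2
    have hins : indepFaces K (insert c F₀) := indep_insert K hcadj F₀ hF₀ hp hq
    have hmem : ∀ w, stepT p q c 1 f w ≠ 0 → w ∈ insert c F₀ := by
      intro w hw
      by_contra hnw
      have hwc : w ≠ c := fun h => hnw (h ▸ Finset.mem_insert_self c F₀)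
      have hwF : w ∉ F₀ := fun h => hnw (Finset.mem_insert_of_mem h)
      have hwp : w ≠ p := fun h => hwF (h ▸ hp)
      have hwq : w ≠ q := fun h => hwF (h ▸ hq)
      have hfw : f w = 0 := by_contra fun h => hwF (hsupp w h)
      apply hw
      simp [stepT, hfw, stepCoef_other hwp hwq hwc]
    rcases le_total (f p) (f q) with hle | hle
    · have hTp : stepT p q c 1 f p = 0 := by
        simp [stepT, stepCoef_p hpq hcp, min_eq_left hle]
      refine ⟨(insert c F₀).erase p, (indep'_iff K K' hadj _).2
        ⟨indepFaces_mono hins (Finset.erase_subset _ _), by simp⟩, fun v hv => ?_⟩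
      exact Finset.mem_erase.2 ⟨fun he => hv (he ▸ hTp), hmem v hv⟩
    · have hTq : stepT p q c 1 f q = 0 := by
        simp [stepT, stepCoef_q hpq hcq, min_eq_right hle]
      refine ⟨(insert c F₀).erase q, (indep'_iff K K' hadj _).2
        ⟨indepFaces_mono hins (Finset.erase_subset _ _), by simp⟩, fun v hv => ?_⟩
      exact Finset.mem_erase.2 ⟨fun he => hv (he ▸ hTq), hmem v hv⟩

end StepLemma

section HE
variable {W : Type} [Fintype W]

lemma step_homotopyEquiv (K K' : SimpleGraph W) (p q c : W)
    (hpq : p ≠ q) (hcp : c ≠ p) (hcq : c ≠ q)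
    (hadj : ∀ u w, K'.Adj u w ↔ K.Adj u w ∨ (u = p ∧ w = q) ∨ (u = q ∧ w = p))
    (hcadj : ∀ w, K.Adj c w → K.Adj p w ∨ K.Adj q w) :
    Nonempty (ContinuousMap.HomotopyEquiv (cxSpace (indepFaces K))
      (cxSpace (indepFaces K'))) := by
  -- generic membership in the K-space
  have memK : ∀ (t : ℝ), 0 ≤ t → t ≤ 1 → ∀ f : cxSpace (indepFaces K),
      (∃ F, indepFaces K F ∧ ∀ v, stepT p q c t f.1 v ≠ 0 → v ∈ F) ∧
        (∀ v, 0 ≤ stepT p q c t f.1 v) ∧ ∑ v, stepT p q c t f.1 v = 1 :=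
    fun t ht0 ht1 f =>
      stepT_mem_aux K hpq hcp hcq hcadj t ht0 ht1 f.1 f.2.1 f.2.2.1 f.2.2.2
  have memK' : ∀ f : cxSpace (indepFaces K),
      (∃ F, indepFaces K' F ∧ ∀ v, stepT p q c 1 f.1 v ≠ 0 → v ∈ F) ∧
        (∀ v, 0 ≤ stepT p q c 1 f.1 v) ∧ ∑ v, stepT p q c 1 f.1 v = 1 :=
    fun f => ⟨stepT_one_mem K K' hpq hcp hcq hadj hcadj f.1 f.2.1 f.2.2.1,
      (memK 1 zero_le_one le_rfl f).2⟩
  have inclmem : ∀ f : cxSpace (indepFaces K'),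
      (∃ F, indepFaces K F ∧ ∀ v, f.1 v ≠ 0 → v ∈ F) ∧
        (∀ v, 0 ≤ f.1 v) ∧ ∑ v, f.1 v = 1 := by
    rintro ⟨f, ⟨F, hF, hs⟩, hpos, hsum⟩
    exact ⟨⟨F, ((indep'_iff K K' hadj F).1 hF).1, hs⟩, hpos, hsum⟩
  have hmu0 : ∀ f : cxSpace (indepFaces K'), min (f.1 p) (f.1 q) = 0 := by
    rintro ⟨f, ⟨F, hF, hsupp⟩, hpos, hsum⟩
    have hn := ((indep'_iff K K' hadj F).1 hF).2
    show min (f p) (f q) = 0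
    by_cases hp : f p = 0
    · rw [hp]; exact min_eq_left (hpos q)
    · have hq : f q = 0 := by
        by_contra hq; exact hn ⟨hsupp p hp, hsupp q hq⟩
      rw [hq]; exact min_eq_right (hpos p)
  have contT : ∀ {X : Type} [TopologicalSpace X] {a : X → ℝ} {b : X → W → ℝ},
      Continuous a → Continuous b → Continuous fun x => stepT p q c (a x) (b x) := by
    intro X _ a b ha hb
    unfold stepT
    fun_prop
  -- the retraction
  let retr : C(cxSpace (indepFaces K), cxSpace (indepFaces K')) :=
    ⟨fun f => ⟨stepT p q c 1 f.1, memK' f⟩, by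
      apply Continuous.subtype_mk
      exact contT continuous_const continuous_subtype_val⟩
  let incl : C(cxSpace (indepFaces K'), cxSpace (indepFaces K)) :=
    ⟨fun f => ⟨f.1, inclmem f⟩, by
      apply Continuous.subtype_mk
      exact continuous_subtype_val⟩
  have hT0 : ∀ f : W → ℝ, stepT p q c 0 f = f := fun f => funext fun w => by
    simp [stepT]
  refine ⟨⟨retr, incl, ?_, ?_⟩⟩
  · -- incl ∘ retr ≃ id via straight-line homotopy
    refine ⟨⟨⟨fun sf => ⟨stepT p q c (1 - sf.1.1) sf.2.1,
        memK (1 - sf.1.1) (by have := sf.1.2.2; simp; linarith)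
          (by have := sf.1.2.1; simp; linarith) sf.2⟩, ?_⟩, ?_, ?_⟩⟩
    · apply Continuous.subtype_mk
      exact contT (by fun_prop) (continuous_subtype_val.comp continuous_snd)
    · intro f
      apply Subtype.ext
      show stepT p q c (1 - ((0 : unitInterval) : ℝ)) f.1 = stepT p q c 1 f.1
      norm_num
    · intro f
      apply Subtype.ext
      show stepT p q c (1 - ((1 : unitInterval) : ℝ)) f.1 = f.1
      rw [show (1 : ℝ) - ((1 : unitInterval) : ℝ) = 0 by norm_num, hT0]
  · -- retr ∘ incl = id
    have : retr.comp incl = ContinuousMap.id _ := by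
      apply ContinuousMap.ext
      intro f
      apply Subtype.ext
      show stepT p q c 1 f.1 = f.1
      funext w
      simp [stepT, hmu0 f]
    rw [this]
end HE

section Loz
variable {V : Type} [Fintype V] (G : SimpleGraph V) (x v : V)

lemma lozin_adj_iff_Y (hvx : v ≠ x) (A B : Set V)
    (u w : {w : V // w ≠ x} ⊕ Fin 4) :
    (lozinModel G x (insert v A) B).Adj u w ↔
      (lozinModel G x A B).Adj u w ∨
        (u = Sum.inr 0 ∧ w = Sum.inl ⟨v, hvx⟩) ∨
        (u = Sum.inl ⟨v, hvx⟩ ∧ w = Sum.inr 0) := by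
  rcases u with u | i <;> rcases w with w | j <;>
    simp [lozinModel, lozinRel, SimpleGraph.fromRel_adj, Set.mem_insert_iff,
      Subtype.ext_iff] <;> tauto

lemma lozin_adj_iff_Z (hvx : v ≠ x) (A B : Set V)
    (u w : {w : V // w ≠ x} ⊕ Fin 4) :
    (lozinModel G x A (insert v B)).Adj u w ↔
      (lozinModel G x A B).Adj u w ∨
        (u = Sum.inr 3 ∧ w = Sum.inl ⟨v, hvx⟩) ∨
        (u = Sum.inl ⟨v, hvx⟩ ∧ w = Sum.inr 3) := by
  rcases u with u | i <;> rcases w with w | j <;>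
    simp [lozinModel, lozinRel, SimpleGraph.fromRel_adj, Set.mem_insert_iff,
      Subtype.ext_iff] <;> tauto

lemma lozin_step_Y (hvx : v ≠ x) (A B : Set V) (hvB : v ∈ B) :
    Nonempty (ContinuousMap.HomotopyEquiv
      (cxSpace (indepFaces (lozinModel G x A B)))
      (cxSpace (indepFaces (lozinModel G x (insert v A) B)))) := by
  refine step_homotopyEquiv (lozinModel G x A B) (lozinModel G x (insert v A) B)
    (Sum.inr 0) (Sum.inl ⟨v, hvx⟩) (Sum.inr 2)
    (by simp) (by simp) (by simp)
    (fun u w => lozin_adj_iff_Y G x v hvx A B u w) ?_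
  intro w hw
  rcases w with u | j
  · exfalso
    simp [lozinModel, lozinRel, SimpleGraph.fromRel_adj] at hw
  · have hj : j = 1 ∨ j = 3 := by
      simp [lozinModel, lozinRel, SimpleGraph.fromRel_adj] at hw
      omega
    rcases hj with rfl | rfl
    · left
      simp [lozinModel, lozinRel, SimpleGraph.fromRel_adj]
    · right
      simp [lozinModel, lozinRel, SimpleGraph.fromRel_adj, hvB]

lemma lozin_step_Z (hvx : v ≠ x) (A B : Set V) (hvA : v ∈ A) :
    Nonempty (ContinuousMap.HomotopyEquiv
      (cxSpace (indepFaces (lozinModel G x A B)))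
      (cxSpace (indepFaces (lozinModel G x A (insert v B))))) := by
  refine step_homotopyEquiv (lozinModel G x A B) (lozinModel G x A (insert v B))
    (Sum.inr 3) (Sum.inl ⟨v, hvx⟩) (Sum.inr 1)
    (by simp) (by simp) (by simp)
    (fun u w => lozin_adj_iff_Z G x v hvx A B u w) ?_
  intro w hw
  rcases w with u | j
  · exfalso
    simp [lozinModel, lozinRel, SimpleGraph.fromRel_adj] at hw
  · have hj : j = 0 ∨ j = 2 := by
      simp [lozinModel, lozinRel, SimpleGraph.fromRel_adj] at hw
      omega
    rcases hj with rfl | rfl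
    · right
      simp [lozinModel, lozinRel, SimpleGraph.fromRel_adj, hvA]
    · left
      simp only [lozinModel, SimpleGraph.fromRel_adj, lozinRel]
      refine ⟨by simp, Or.inr ?_⟩
      decide

end Loz

section Fill
variable {V : Type} [Fintype V] (G : SimpleGraph V) (x : V)

lemma lozin_fill_Y : ∀ (n : ℕ) (A B : Set V), A ∪ B = G.neighborSet x →
    (G.neighborSet x \ A).ncard = n →
    Nonempty (ContinuousMap.HomotopyEquiv
      (cxSpace (indepFaces (lozinModel G x A B)))
      (cxSpace (indepFaces (lozinModel G x (G.neighborSet x) B)))) := by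
  intro n
  induction n with
  | zero =>
    intro A B hu h0
    have hAN : A ⊆ G.neighborSet x := hu ▸ Set.subset_union_left
    have hNA : G.neighborSet x ⊆ A :=
      Set.diff_eq_empty.1 ((Set.ncard_eq_zero (Set.toFinite _)).1 h0)
    have hA : A = G.neighborSet x := Set.Subset.antisymm hAN hNA
    rw [hA]
    exact ⟨ContinuousMap.HomotopyEquiv.refl _⟩
  | succ n ih =>
    intro A B hu h1
    have hne : (G.neighborSet x \ A).Nonempty :=
      Set.nonempty_of_ncard_ne_zero (by omega)
    obtain ⟨v, hvN, hvA⟩ := hne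
    have hadjxv : G.Adj x v := hvN
    have hvx : v ≠ x := hadjxv.ne'
    have hvB : v ∈ B := by
      have : v ∈ A ∪ B := hu ▸ hvN
      exact this.resolve_left hvA
    have hstep := lozin_step_Y G x v hvx A B hvB
    have hins : insert v A ∪ B = G.neighborSet x := by
      rw [Set.insert_union, hu, Set.insert_eq_self.2 hvN]
    have hdiff : G.neighborSet x \ insert v A = (G.neighborSet x \ A) \ {v} := by
      ext w; simp [Set.mem_insert_iff]; tauto
    have hvmem : v ∈ G.neighborSet x \ A := ⟨hvN, hvA⟩
    have hcard : (G.neighborSet x \ insert v A).ncard = n := by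
      rw [hdiff, Set.ncard_diff_singleton_of_mem hvmem, h1]
      omega
    obtain ⟨e2⟩ := ih (insert v A) B hins hcard
    exact ⟨hstep.some.trans e2⟩

lemma lozin_fill_Z : ∀ (n : ℕ) (B : Set V), B ⊆ G.neighborSet x →
    (G.neighborSet x \ B).ncard = n →
    Nonempty (ContinuousMap.HomotopyEquiv
      (cxSpace (indepFaces (lozinModel G x (G.neighborSet x) B)))
      (cxSpace (indepFaces (lozinModel G x (G.neighborSet x) (G.neighborSet x))))) := by
  intro n
  induction n with
  | zero =>
    intro B hBN h0
    have hNB : G.neighborSet x ⊆ B :=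
      Set.diff_eq_empty.1 ((Set.ncard_eq_zero (Set.toFinite _)).1 h0)
    rw [Set.Subset.antisymm hBN hNB]
    exact ⟨ContinuousMap.HomotopyEquiv.refl _⟩
  | succ n ih =>
    intro B hBN h1
    have hne : (G.neighborSet x \ B).Nonempty :=
      Set.nonempty_of_ncard_ne_zero (by omega)
    obtain ⟨v, hvN, hvB⟩ := hne
    have hadjxv : G.Adj x v := hvN
    have hvx : v ≠ x := hadjxv.ne'
    have hstep := lozin_step_Z G x v hvx (G.neighborSet x) B hvN
    have hins : insert v B ⊆ G.neighborSet x := Set.insert_subset hvN hBN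
    have hdiff : G.neighborSet x \ insert v B = (G.neighborSet x \ B) \ {v} := by
      ext w; simp [Set.mem_insert_iff]; tauto
    have hvmem : v ∈ G.neighborSet x \ B := ⟨hvN, hvB⟩
    have hcard : (G.neighborSet x \ insert v B).ncard = n := by
      rw [hdiff, Set.ncard_diff_singleton_of_mem hvmem, h1]
      omega
    obtain ⟨e2⟩ := ih (insert v B) hins hcard
    exact ⟨hstep.some.trans e2⟩

end Fill

end AuxLozin

/-- The homotopy type of the Lozin transform is independent
of the chosen partition of `N_G(x)`. -/
theorem lozin_homotopyEquiv_partition_independent {V : Type} [Fintype V]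
    (G : SimpleGraph V) (x : V) (Y Z Y' Z' : Set V)
    (h : IsLozinPartition G x Y Z) (h' : IsLozinPartition G x Y' Z') :
    Nonempty (ContinuousMap.HomotopyEquiv
      (cxSpace (indepFaces (lozinModel G x Y Z)))
      (cxSpace (indepFaces (lozinModel G x Y' Z')))) := by
  obtain ⟨hYZ, -⟩ := h
  obtain ⟨hYZ', -⟩ := h'
  obtain ⟨e1⟩ := lozin_fill_Y G x _ Y Z hYZ rfl
  obtain ⟨e2⟩ := lozin_fill_Z G x _ Z (by rw [← hYZ]; exact Set.subset_union_right) rfl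
  obtain ⟨e1'⟩ := lozin_fill_Y G x _ Y' Z' hYZ' rfl
  obtain ⟨e2'⟩ := lozin_fill_Z G x _ Z' (by rw [← hYZ']; exact Set.subset_union_right) rfl
  exact ⟨((e1.trans e2).trans (e2'.symm)).trans (e1'.symm)⟩
end
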